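/- arXiv:1610.02439 — 12 statements merged into one kernel-verified Lean document; each statement's English description precedes it below -/
import Mathlib

section
/- For every integer n ≥ 2, all but finitely many positive integers can be written as a sum of distinct n-th powers of positive integers; that is, the set of positive integers m for which there is no finite set F of positive integers with ∑_{k∈F} k^n = m is finite. -/
open Finset Polynomial

private lemma hasse_eval_top {m : ℕ} {p : ℤ[X]} (hp : p.natDegree ≤ m + 1) (r : ℤ) :
    (taylor r p).coeff (m+1) = p.coeff (m+1) := by
  rw [taylor_coeff]
  have h : hasseDeriv (m+1) p = C (p.coeff (m+1)) := by
    ext j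
    rw [hasseDeriv_coeff, coeff_C]
    rcases Nat.eq_zero_or_pos j with h | h
    · simp [h]
    · have h0 : p.coeff (j + (m+1)) = 0 := coeff_eq_zero_of_natDegree_lt (by omega)
      rw [h0, if_neg (by omega)]
      ring
  simp [h]

private lemma hasse_eval_next {m : ℕ} {p : ℤ[X]} (hp : p.natDegree ≤ m + 1) (r : ℤ) :
    (taylor r p).coeff m = p.coeff m + (m+1) * p.coeff (m+1) * r := by
  rw [taylor_coeff]
  have h : hasseDeriv m p = C (p.coeff m) + C (((m:ℤ)+1) * p.coeff (m+1)) * X := by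
    ext j
    rw [hasseDeriv_coeff, coeff_add, coeff_C, coeff_C_mul, coeff_X]
    match j with
    | 0 => simp
    | 1 =>
      have hc : (1+m).choose m = m + 1 := by
        have := Nat.choose_symm (n := 1+m) (k := m) (by omega)
        simpa [add_comm] using this.symm
      rw [hc, if_neg (by omega), if_pos rfl]
      push_cast
      ring
    | (j+2) =>
      have h0 : p.coeff (j + 2 + m) = 0 := coeff_eq_zero_of_natDegree_lt (by omega)
      rw [h0, if_neg (by omega), if_neg (by omega)]
      ring
  rw [h]
  simp
private lemma diff_sum (m : ℕ) (h : ℕ → ℤ) :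
    ∀ (p : ℤ[X]), p.natDegree ≤ m → ∀ x : ℤ,
    ∑ S ∈ (range m).powerset, (-1:ℤ)^(m - S.card) * p.eval (x + ∑ i ∈ S, h i)
      = (m.factorial : ℤ) * (∏ i ∈ range m, h i) * p.coeff m := by
  induction m with
  | zero =>
    intro p hp x
    rw [Finset.range_zero, Finset.powerset_empty, Finset.sum_singleton,
      Polynomial.eq_C_of_natDegree_le_zero hp]
    simp
  | succ m ih =>
    intro p hp x
    set q : ℤ[X] := taylor (h m) p - p with hq
    have hqdeg : q.natDegree ≤ m := by
      apply Polynomial.natDegree_le_iff_coeff_eq_zero.2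
      intro j hj
      rcases Nat.lt_or_ge (m+1) j with hj2 | hj2
      · have h1 : p.coeff j = 0 := coeff_eq_zero_of_natDegree_lt (by omega)
        have h2 : (taylor (h m) p).coeff j = 0 :=
          coeff_eq_zero_of_natDegree_lt (by rw [natDegree_taylor]; omega)
        simp [hq, h1, h2]
      · have hj3 : j = m + 1 := by omega
        subst hj3
        simp [hq, hasse_eval_top hp]
    have hqc : q.coeff m = (m+1) * p.coeff (m+1) * (h m) := by
      simp [hq, hasse_eval_next hp]
    have hqe : ∀ y : ℤ, q.eval y = p.eval (y + h m) - p.eval y := by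
      intro y
      simp [hq, Polynomial.taylor_apply, Polynomial.eval_comp]
    have hsplit : ∑ S ∈ (range (m+1)).powerset,
        (-1:ℤ)^(m + 1 - S.card) * p.eval (x + ∑ i ∈ S, h i)
        = ∑ S ∈ (range m).powerset, (-1:ℤ)^(m - S.card) * q.eval (x + ∑ i ∈ S, h i) := by
      rw [Finset.range_add_one, Finset.sum_powerset_insert (by simp)]
      rw [← Finset.sum_add_distrib]
      apply Finset.sum_congr rfl
      intro S hS
      rw [Finset.mem_powerset] at hS
      have hm : m ∉ S := fun hc => absurd (hS hc) (by simp)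
      have hcard : S.card ≤ m := le_trans (Finset.card_le_card hS) (by simp)
      rw [Finset.sum_insert hm, Finset.card_insert_of_notMem hm]
      rw [hqe]
      have e1 : m + 1 - S.card = (m - S.card) + 1 := by omega
      have e2 : m + 1 - (S.card + 1) = m - S.card := by omega
      rw [e1, e2]
      have e3 : x + (h m + ∑ i ∈ S, h i) = x + ∑ i ∈ S, h i + h m := by ring
      rw [e3]
      ring
    rw [hsplit, ih q hqdeg x, hqc, Finset.prod_range_succ, Nat.factorial_succ]
    push_cast
    ring
private lemma sum_two_pow (n : ℕ) : ∑ i ∈ range n, 2^i + 1 = 2^n := by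
  induction n with
  | zero => simp
  | succ n ih => rw [Finset.sum_range_succ, pow_succ]; omega

private lemma sig_lt {n : ℕ} {S : Finset ℕ} (hS : S ⊆ range n) :
    ∑ i ∈ S, 2^i < 2^n := by
  have h1 : ∑ i ∈ S, 2^i ≤ ∑ i ∈ range n, 2^i :=
    Finset.sum_le_sum_of_subset hS
  have := sum_two_pow n
  omega

private lemma sig_inj : Function.Injective (fun S : Finset ℕ => ∑ i ∈ S, 2^i) :=
  Finset.geomSum_injective le_rfl

private lemma gadget (n : ℕ) (x : ℕ) :
    ∃ P Q : Finset ℕ, P ⊆ Ico x (x + 2^n) ∧ Q ⊆ Ico x (x + 2^n) ∧ Disjoint P Q ∧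
      (∑ k ∈ P, k^n) = (∑ k ∈ Q, k^n) + n.factorial * 2 ^ (∑ i ∈ range n, i) := by
  classical
  set f : Finset ℕ → ℕ := fun S => x + ∑ i ∈ S, 2^i with hf
  have hfinj : Function.Injective f := fun S T h => sig_inj (by simpa [hf] using h)
  set Pcl := (range n).powerset.filter (fun S => (n - S.card) % 2 = 0) with hPcl
  set Qcl := (range n).powerset.filter (fun S => ¬ (n - S.card) % 2 = 0) with hQcl
  refine ⟨Pcl.image f, Qcl.image f, ?_, ?_, ?_, ?_⟩
  · intro a ha
    obtain ⟨S, hS, rfl⟩ := Finset.mem_image.1 ha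
    have hS' : S ⊆ range n := Finset.mem_powerset.1 (Finset.mem_filter.1 hS).1
    simp only [Finset.mem_Ico, hf]
    have := sig_lt hS'
    omega
  · intro a ha
    obtain ⟨S, hS, rfl⟩ := Finset.mem_image.1 ha
    have hS' : S ⊆ range n := Finset.mem_powerset.1 (Finset.mem_filter.1 hS).1
    simp only [Finset.mem_Ico, hf]
    have := sig_lt hS'
    omega
  · rw [Finset.disjoint_left]
    intro a haP haQ
    obtain ⟨S, hS, hfS⟩ := Finset.mem_image.1 haP
    obtain ⟨T, hT, hfT⟩ := Finset.mem_image.1 haQ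
    have : S = T := hfinj (hfS.trans hfT.symm)
    subst this
    exact (Finset.mem_filter.1 hT).2 (Finset.mem_filter.1 hS).2
  · -- the main identity
    have key := diff_sum n (fun i => 2^i) (X^n) (by simp) (x : ℤ)
    rw [Polynomial.coeff_X_pow, if_pos rfl, mul_one] at key
    have hprod : (∏ i ∈ range n, ((2:ℤ))^i) = 2 ^ (∑ i ∈ range n, i) :=
      Finset.prod_pow_eq_pow_sum _ _ _
    rw [hprod] at key
    have hsplit := Finset.sum_filter_add_sum_filter_not (range n).powerset
      (fun S => (n - S.card) % 2 = 0)
      (fun S => (-1:ℤ)^(n - S.card) * Polynomial.eval ((x:ℤ) + ∑ i ∈ S, (2:ℤ)^i) (X^n))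
    rw [← hsplit] at key
    have hP1 : ∑ S ∈ Pcl, (-1:ℤ)^(n - S.card) *
        Polynomial.eval ((x:ℤ) + ∑ i ∈ S, (2:ℤ)^i) (X^n)
        = ∑ S ∈ Pcl, (((f S : ℕ)):ℤ)^n := by
      apply Finset.sum_congr rfl
      intro S hS
      have he : (n - S.card) % 2 = 0 := (Finset.mem_filter.1 hS).2
      rw [Polynomial.eval_pow, Polynomial.eval_X, Even.neg_one_pow (Nat.even_iff.2 he)]
      push_cast [hf]
      ring
    have hQ1 : ∑ S ∈ Qcl, (-1:ℤ)^(n - S.card) *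
        Polynomial.eval ((x:ℤ) + ∑ i ∈ S, (2:ℤ)^i) (X^n)
        = - ∑ S ∈ Qcl, (((f S : ℕ)):ℤ)^n := by
      rw [← Finset.sum_neg_distrib]
      apply Finset.sum_congr rfl
      intro S hS
      have he : ¬ (n - S.card) % 2 = 0 := (Finset.mem_filter.1 hS).2
      rw [Polynomial.eval_pow, Polynomial.eval_X,
        Odd.neg_one_pow (Nat.odd_iff.2 (by omega))]
      push_cast [hf]
      ring
    rw [hP1, hQ1] at key
    have hPsum : (↑(∑ k ∈ Pcl.image f, k^n) : ℤ) = ∑ S ∈ Pcl, (((f S):ℕ):ℤ)^n := by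
      rw [Finset.sum_image (fun a _ b _ h => hfinj h)]
      push_cast
      rfl
    have hQsum : (↑(∑ k ∈ Qcl.image f, k^n) : ℤ) = ∑ S ∈ Qcl, (((f S):ℕ):ℤ)^n := by
      rw [Finset.sum_image (fun a _ b _ h => hfinj h)]
      push_cast
      rfl
    have : (↑(∑ k ∈ Pcl.image f, k^n) : ℤ)
        = (↑((∑ k ∈ Qcl.image f, k^n) + n.factorial * 2 ^ (∑ i ∈ range n, i)) : ℤ) := by
      push_cast [hPsum, hQsum]
      push_cast at key
      linarith [key]
    exact_mod_cast this
private lemma master (n : ℕ) (I : Finset ℕ) (hI : ∀ k ∈ I, 0 < k) (A L₀ : ℕ)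
    (hbase : ∀ m, A ≤ m → m ≤ A + L₀ → ∃ F, F ⊆ I ∧ ∑ k ∈ F, k ^ n = m)
    (hcond : ∀ k, 0 < k → k ∉ I →
      k ^ n ≤ 1 + L₀ + ∑ j ∈ (Finset.Ico 1 k).filter (· ∉ I), j ^ n) :
    ∀ m, A ≤ m → ∃ F : Finset ℕ, (∀ k ∈ F, 0 < k) ∧ ∑ k ∈ F, k ^ n = m := by
  classical
  set L : ℕ → ℕ := fun N => L₀ + ∑ j ∈ (Finset.Ico 1 N).filter (· ∉ I), j ^ n with hL
  have key : ∀ N, ∀ m, A ≤ m → m ≤ A + L N →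
      ∃ F, F ⊆ I ∪ (Finset.Ico 1 N).filter (· ∉ I) ∧ ∑ k ∈ F, k ^ n = m := by
    intro N
    induction N with
    | zero =>
      intro m hm1 hm2
      obtain ⟨F, hF, hs⟩ := hbase m hm1 (by simpa [hL] using hm2)
      exact ⟨F, hF.trans Finset.subset_union_left, hs⟩
    | succ N ih =>
      intro m hm1 hm2
      rcases Nat.eq_zero_or_pos N with rfl | hN
      · -- Ico 1 1 = ∅
        obtain ⟨F, hF, hs⟩ := hbase m hm1 (by simpa [hL] using hm2)
        exact ⟨F, hF.trans Finset.subset_union_left, hs⟩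
      by_cases hNI : N ∈ I
      · have heq : (Finset.Ico 1 (N+1)).filter (· ∉ I) = (Finset.Ico 1 N).filter (· ∉ I) := by
          apply Finset.ext
          intro j
          simp only [Finset.mem_filter, Finset.mem_Ico]
          constructor
          · rintro ⟨⟨h1, h2⟩, h3⟩
            refine ⟨⟨h1, ?_⟩, h3⟩
            rcases Nat.lt_or_ge j N with h | h
            · exact h
            · exfalso; have : j = N := by omega
              exact h3 (this ▸ hNI)
          · rintro ⟨⟨h1, h2⟩, h3⟩
            exact ⟨⟨h1, by omega⟩, h3⟩
        obtain ⟨F, hF, hs⟩ := ih m hm1 (by simp only [hL] at hm2 ⊢; rw [heq] at hm2; exact hm2)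
        refine ⟨F, hF.trans ?_, hs⟩
        rw [heq]
      · -- N ∉ I, N ≥ 1
        have hsplit : (Finset.Ico 1 (N+1)).filter (· ∉ I)
            = insert N ((Finset.Ico 1 N).filter (· ∉ I)) := by
          apply Finset.ext
          intro j
          simp only [Finset.mem_filter, Finset.mem_Ico, Finset.mem_insert]
          constructor
          · rintro ⟨⟨h1, h2⟩, h3⟩
            rcases Nat.lt_or_ge j N with h | h
            · exact Or.inr ⟨⟨h1, h⟩, h3⟩
            · exact Or.inl (by omega)
          · rintro (rfl | ⟨⟨h1, h2⟩, h3⟩)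
            · exact ⟨⟨hN, by omega⟩, hNI⟩
            · exact ⟨⟨h1, by omega⟩, h3⟩
        have hNmem : N ∉ (Finset.Ico 1 N).filter (· ∉ I) := by simp
        have hLs : L (N+1) = L N + N ^ n := by
          rw [hL]
          simp only
          rw [hsplit, Finset.sum_insert hNmem]
          ring
        rcases le_or_gt m (A + L N) with hle | hgt
        · obtain ⟨F, hF, hs⟩ := ih m hm1 hle
          refine ⟨F, hF.trans ?_, hs⟩
          rw [hsplit]
          exact Finset.union_subset_union (le_refl _) (Finset.subset_insert _ _)
        · have hcondN := hcond N hN hNI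
          have hmN : A ≤ m - N ^ n ∧ m - N ^ n ≤ A + L N := by
            constructor
            · have h9 : N ^ n ≤ 1 + L N := by
                simp only [hL]
                omega
              omega
            · rw [hLs] at hm2; omega
          obtain ⟨F, hF, hs⟩ := ih (m - N ^ n) hmN.1 hmN.2
          have hNF : N ∉ F := by
            intro hc
            rcases Finset.mem_union.1 (hF hc) with h | h
            · exact hNI h
            · rw [Finset.mem_filter, Finset.mem_Ico] at h; omega
          refine ⟨insert N F, ?_, ?_⟩
          · rw [hsplit]
            intro a ha
            rcases Finset.mem_insert.1 ha with rfl | ha'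
            · exact Finset.mem_union_right _ (Finset.mem_insert_self _ _)
            · rcases Finset.mem_union.1 (hF ha') with h | h
              · exact Finset.mem_union_left _ h
              · exact Finset.mem_union_right _ (Finset.mem_insert_of_mem h)
          · rw [Finset.sum_insert hNF, hs]
            have h9 : N ^ n ≤ 1 + L N := by
              simp only [hL]
              omega
            omega
  intro m hm
  -- choose N large enough
  set N := (I.sup id) + m + 1 with hN
  have hreach : m ≤ A + L N := by
    have hsub : Finset.Ico ((I.sup id) + 1) N ⊆ (Finset.Ico 1 N).filter (· ∉ I) := by
      intro j hj
      rw [Finset.mem_Ico] at hj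
      rw [Finset.mem_filter, Finset.mem_Ico]
      refine ⟨⟨by omega, hj.2⟩, fun hc => ?_⟩
      have := Finset.le_sup (f := id) hc
      simp at this
      omega
    have h1 : ∑ j ∈ Finset.Ico ((I.sup id) + 1) N, j ^ n
        ≤ ∑ j ∈ (Finset.Ico 1 N).filter (· ∉ I), j ^ n :=
      Finset.sum_le_sum_of_subset hsub
    have h2 : (Finset.Ico ((I.sup id) + 1) N).card
        ≤ ∑ j ∈ Finset.Ico ((I.sup id) + 1) N, j ^ n := by
      have := Finset.card_nsmul_le_sum (Finset.Ico ((I.sup id) + 1) N)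
        (fun j => j ^ n) 1 (fun j hj => by
          rw [Finset.mem_Ico] at hj
          exact Nat.one_le_pow _ _ (by omega))
      simpa using this
    have h3 : m ≤ (Finset.Ico ((I.sup id) + 1) N).card := by
      rw [Nat.card_Ico]
      omega
    simp only [hL]
    omega
  obtain ⟨F, hF, hs⟩ := key N m hm hreach
  refine ⟨F, fun k hk => ?_, hs⟩
  rcases Finset.mem_union.1 (hF hk) with h | h
  · exact hI k h
  · rcases Finset.mem_filter.1 h with ⟨h1, _⟩
    rw [Finset.mem_Ico] at h1
    omega
private lemma construction (n : ℕ) (hn : 1 ≤ n) :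
    ∃ (A L₀ : ℕ) (I : Finset ℕ), 1 ≤ A ∧ (∀ k ∈ I, 0 < k) ∧
      (∀ m, A ≤ m → m ≤ A + L₀ → ∃ F, F ⊆ I ∧ ∑ k ∈ F, k ^ n = m) ∧
      (∀ k, 0 < k → k ∉ I →
        k ^ n ≤ 1 + L₀ + ∑ j ∈ (Finset.Ico 1 k).filter (· ∉ I), j ^ n) := by
  classical
  set D := n.factorial * 2 ^ (∑ i ∈ range n, i) with hD
  have hD1 : 1 ≤ D := Nat.one_le_iff_ne_zero.2 (by positivity)
  set E : ℕ → ℕ := fun r => ∑ i ∈ range r, (1 + i*D)^n with hE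
  have hEmod : ∀ r, E r ≡ r [MOD D] := by
    intro r
    induction r with
    | zero => simp [hE, Nat.ModEq.refl]
    | succ r ih =>
      have h1 : (1 + r*D) ≡ 1 [MOD D] := by
        unfold Nat.ModEq
        simp [Nat.add_mul_mod_self_right]
      have h2 : (1 + r*D)^n ≡ 1 [MOD D] := by
        simpa using h1.pow n
      have h3 : E (r+1) = E r + (1 + r*D)^n := by
        simp [hE, Finset.sum_range_succ]
      rw [h3]
      simpa using ih.add h2
  have hEmono : ∀ r s, r ≤ s → E r ≤ E s := by
    intro r s hrs
    exact Finset.sum_le_sum_of_subset (Finset.range_subset_range.2 hrs)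
  have hE1 : E 1 = 1 := by simp [hE]
  set B := (2^(n+1) + 2*D)^n with hB
  set T := E D + B + 1 with hT
  set W := T * 2^n with hW
  set x₀ := D*D + 2*(D + W + 2^n) + 2 with hx₀
  set R : Finset ℕ := (range D).image (fun i => 1 + i*D) with hR
  have hRcard : R.card ≤ D := by
    rw [hR]
    simpa using Finset.card_image_le (s := range D) (f := fun i => 1 + i*D)
  set I : Finset ℕ := R ∪ Ico x₀ (x₀ + W) with hI
  have hIcard : I.card ≤ D + W := by
    have h1 := Finset.card_union_le R (Ico x₀ (x₀ + W))
    rw [Nat.card_Ico] at h1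
    rw [hI]
    omega
  choose P Q hP hQ hPQdisj hPQsum using gadget n
  set xi : ℕ → ℕ := fun i => x₀ + i * 2^n with hxi
  set Qtot := ∑ i ∈ range T, ∑ k ∈ Q (xi i), k^n with hQtot
  set A := Qtot + E D with hA
  set L₀ := T*D - E D with hL₀
  have hTD : E D ≤ T*D := by
    calc E D ≤ T := by omega
    _ ≤ T * D := Nat.le_mul_of_pos_right _ (by omega)
  have hL₀B : B + 1 ≤ L₀ := by
    have : T ≤ T * D := Nat.le_mul_of_pos_right _ (by omega)
    omega
  have hIcoDisj : ∀ i j : ℕ, i ≠ j →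
      Disjoint (Ico (xi i) (xi i + 2^n)) (Ico (xi j) (xi j + 2^n)) := by
    intro i j hij
    rw [Finset.disjoint_left]
    intro a ha hb
    rw [Finset.mem_Ico] at ha hb
    simp only [hxi] at ha hb
    rcases Nat.lt_or_ge i j with h | h
    · have h1 : i + 1 ≤ j := h
      have h2 : (i+1) * 2^n ≤ j * 2^n := Nat.mul_le_mul_right _ h1
      have h3 : i * 2^n + 2^n = (i+1) * 2^n := by ring
      omega
    · have h1 : j + 1 ≤ i := by omega
      have h2 : (j+1) * 2^n ≤ i * 2^n := Nat.mul_le_mul_right _ h1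
      have h3 : j * 2^n + 2^n = (j+1) * 2^n := by ring
      omega
  have hFt : ∀ t, t ≤ T → ∃ Ft : Finset ℕ, Ft ⊆ Ico x₀ (x₀ + W) ∧
      ∑ k ∈ Ft, k^n = Qtot + t * D := by
    intro t ht
    set f : ℕ → Finset ℕ := fun i => if i < t then P (xi i) else Q (xi i) with hf
    have hGsub : ∀ i, f i ⊆ Ico (xi i) (xi i + 2^n) := by
      intro i
      rw [hf]
      by_cases h : i < t
      · simpa [h] using hP (xi i)
      · simpa [h] using hQ (xi i)
    refine ⟨(range T).biUnion f, ?_, ?_⟩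
    · intro a ha
      obtain ⟨i, hi, hai⟩ := Finset.mem_biUnion.1 ha
      rw [Finset.mem_range] at hi
      have h2 := hGsub i hai
      rw [Finset.mem_Ico] at h2 ⊢
      simp only [hxi] at h2
      have h4 : (i+1) * 2^n ≤ T * 2^n := Nat.mul_le_mul_right _ hi
      have h5 : i * 2^n + 2^n = (i+1) * 2^n := by ring
      simp only [hW]
      omega
    · rw [Finset.sum_biUnion (fun i _ j _ hij =>
        Finset.disjoint_of_subset_left (hGsub i)
          (Finset.disjoint_of_subset_right (hGsub j) (hIcoDisj i j hij)))]
      have hterm : ∀ i ∈ range T,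
          ∑ k ∈ f i, k^n = (∑ k ∈ Q (xi i), k^n) + (if i < t then D else 0) := by
        intro i _
        rw [hf]
        by_cases h : i < t
        · simp [h, hPQsum (xi i), hD]
        · simp [h]
      rw [Finset.sum_congr rfl hterm, Finset.sum_add_distrib]
      have hfil : (range T).filter (fun i => i < t) = range t := by
        apply Finset.ext
        intro j
        simp only [Finset.mem_filter, Finset.mem_range]
        omega
      have h6 : ∑ i ∈ range T, (if i < t then D else 0) = t * D := by
        rw [← Finset.sum_filter, hfil, Finset.sum_const, Finset.card_range, smul_eq_mul]
      rw [h6]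
  have hA1 : 1 ≤ A := by
    have h1 : E 1 ≤ E D := hEmono 1 D hD1
    simp only [hA]
    omega
  refine ⟨A, L₀, I, hA1, ?_, ?_, ?_⟩
  · intro k hk
    rcases Finset.mem_union.1 hk with h | h
    · obtain ⟨i, _, rfl⟩ := Finset.mem_image.1 h
      omega
    · rw [Finset.mem_Ico] at h
      omega
  · -- hbase
    intro m hm1 hm2
    set w := m - Qtot with hw
    have hwE : E D ≤ w := by simp only [hA] at hm1; omega
    set r := w % D with hr
    have hrD : r < D := Nat.mod_lt _ (by omega)
    have hErw : E r ≤ w := le_trans (hEmono r D (le_of_lt hrD)) hwE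
    have hdvd : D ∣ (w - E r) := by
      have h1 : E r ≡ w [MOD D] := by
        calc E r ≡ r [MOD D] := hEmod r
        _ ≡ w [MOD D] := by rw [hr]; exact Nat.mod_modEq w D
      exact (Nat.modEq_iff_dvd' hErw).1 h1
    obtain ⟨t, htval⟩ := hdvd
    have htval' : w - E r = t * D := by rw [htval, mul_comm]
    have hwTD : w ≤ T * D := by
      simp only [hA, hL₀] at hm2
      omega
    have htT : t ≤ T := by
      have h1 : t * D ≤ T * D := by omega
      by_contra hc
      push_neg at hc
      have h2 : T * D < t * D := Nat.mul_lt_mul_of_lt_of_le hc le_rfl (by omega)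
      omega
    obtain ⟨Ft, hFtsub, hFtsum⟩ := hFt t htT
    set Rr : Finset ℕ := (range r).image (fun i => 1 + i*D) with hRr
    have hRrsum : ∑ k ∈ Rr, k^n = E r := by
      rw [hRr, Finset.sum_image]
      intro a _ b _ hab
      have : a * D = b * D := by simp only at hab; omega
      exact Nat.eq_of_mul_eq_mul_right (by omega) this
    have hRrI : Rr ⊆ I := by
      intro a ha
      obtain ⟨i, hi, rfl⟩ := Finset.mem_image.1 ha
      rw [Finset.mem_range] at hi
      apply Finset.mem_union_left
      exact Finset.mem_image.2 ⟨i, Finset.mem_range.2 (by omega), rfl⟩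
    have hRrlt : ∀ a ∈ Rr, a < x₀ := by
      intro a ha
      obtain ⟨i, hi, rfl⟩ := Finset.mem_image.1 ha
      rw [Finset.mem_range] at hi
      have h1 : i * D ≤ D * D := Nat.mul_le_mul_right _ (by omega)
      omega
    have hdisjRF : Disjoint Rr Ft := by
      rw [Finset.disjoint_left]
      intro a ha hb
      have h1 := hRrlt a ha
      have h2 := hFtsub hb
      rw [Finset.mem_Ico] at h2
      omega
    have hFtI : Ft ⊆ I := fun a ha => Finset.mem_union_right _ (hFtsub ha)
    refine ⟨Rr ∪ Ft, Finset.union_subset hRrI hFtI, ?_⟩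
    rw [Finset.sum_union hdisjRF, hRrsum, hFtsum]
    have h9 : m = Qtot + w := by simp only [hA] at hm1; omega
    omega
  · -- hcond
    intro k hk hkI
    rcases le_or_gt k (2^(n+1) + 2*D) with hsmall | hbig
    · have h1 : k ^ n ≤ B := by
        rw [hB]
        exact Nat.pow_le_pow_left hsmall n
      omega
    · set h := k - k/2 with hh
      set U := (Finset.Ico h k).filter (· ∉ I) with hU
      have hcardIco : (Finset.Ico h k).card = k / 2 := by
        rw [Nat.card_Ico]
        omega
      have hsplitc : ((Finset.Ico h k).filter (· ∉ I)).card
          + ((Finset.Ico h k).filter (· ∈ I)).card = (Finset.Ico h k).card := by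
        have h0 := Finset.card_filter_add_card_filter_not
          (s := Finset.Ico h k) (p := (· ∉ I))
        simpa [not_not] using h0
      have hUcard : 2^n ≤ U.card := by
        rcases Nat.lt_or_ge k x₀ with hcase | hcase
        · have hsubR : (Finset.Ico h k).filter (· ∈ I) ⊆ R := by
            intro a ha
            rw [Finset.mem_filter] at ha
            rcases Finset.mem_union.1 ha.2 with h' | h'
            · exact h'
            · exfalso
              rw [Finset.mem_Ico] at h'
              have h3 := ha.1
              rw [Finset.mem_Ico] at h3
              omega
          have hcardfil : ((Finset.Ico h k).filter (· ∈ I)).card ≤ D :=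
            le_trans (Finset.card_le_card hsubR) hRcard
          simp only [hU]
          omega
        · rcases Nat.lt_or_ge k (x₀ + W) with hcase2 | hcase2
          · exact absurd (Finset.mem_union_right _ (Finset.mem_Ico.2 ⟨hcase, hcase2⟩)) hkI
          · have hsubI : (Finset.Ico h k).filter (· ∈ I) ⊆ I :=
              fun a ha => (Finset.mem_filter.1 ha).2
            have hcardfil : ((Finset.Ico h k).filter (· ∈ I)).card ≤ D + W :=
              le_trans (Finset.card_le_card hsubI) hIcard
            have hk2 : 2^n + (D + W) ≤ k / 2 := by omega
            simp only [hU]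
            omega
      have hUsum : 2^n * h^n ≤ ∑ j ∈ U, j ^ n := by
        have hterm : ∀ j ∈ U, h^n ≤ j ^ n := by
          intro j hj
          have := (Finset.mem_Ico.1 (Finset.mem_filter.1 hj).1).1
          exact Nat.pow_le_pow_left this n
        calc 2^n * h^n ≤ U.card * h^n := Nat.mul_le_mul_right _ hUcard
        _ ≤ ∑ j ∈ U, j ^ n := by
            have := Finset.card_nsmul_le_sum U (fun j => j ^ n) (h^n) hterm
            simpa [mul_comm] using this
      have hkh : k ^ n ≤ 2^n * h^n := by
        have h2h : k ≤ 2 * h := by omega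
        calc k ^ n ≤ (2*h) ^ n := Nat.pow_le_pow_left h2h n
        _ = 2^n * h^n := mul_pow 2 h n
      have hUsub : U ⊆ (Finset.Ico 1 k).filter (· ∉ I) := by
        intro a ha
        rw [Finset.mem_filter] at ha ⊢
        refine ⟨?_, ha.2⟩
        have := Finset.mem_Ico.1 ha.1
        rw [Finset.mem_Ico]
        omega
      have hfin : ∑ j ∈ U, j ^ n ≤ ∑ j ∈ (Finset.Ico 1 k).filter (· ∉ I), j ^ n :=
        Finset.sum_le_sum_of_subset hUsub
      omega

/-- For every integer `n ≥ 2`, all but finitely many positive integers are sums of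
distinct `n`-th powers of positive integers. -/
theorem completeness_of_nth_powers (n : ℕ) (hn : 2 ≤ n) :
    {m : ℕ | 0 < m ∧
      ¬ ∃ F : Finset ℕ, (∀ k ∈ F, 0 < k) ∧ F.Nonempty ∧ ∑ k ∈ F, k ^ n = m}.Finite := by
  obtain ⟨A, L₀, I, hA1, hIpos, hbase, hcond⟩ := construction n (by omega)
  have hall := master n I hIpos A L₀ hbase hcond
  apply Set.Finite.subset (Set.finite_Iio A)
  intro m hm
  rw [Set.mem_setOf_eq] at hm
  rw [Set.mem_Iio]
  by_contra hc
  push_neg at hc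
  obtain ⟨F, hFpos, hFsum⟩ := hall m hc
  apply hm.2
  refine ⟨F, hFpos, ?_, hFsum⟩
  rcases Finset.eq_empty_or_nonempty F with rfl | hne
  · exfalso
    simp only [Finset.sum_empty] at hFsum
    omega
  · exact hne
end

section
/- Let k be a positive integer, let S = (s₁, s₂, …) be a strictly increasing sequence of positive integers satisfying s₁ ≤ k and s_m ≤ k + ∑_{j=1}^{m−1} s_j for all m ≥ 2, and let T = (t₁, t₂, …) be a sequence of positive integers such that for every integer t with 1 ≤ t ≤ k there is a finite nonempty set J of indices with c + t = ∑_{j∈J} t_j. Then for every integer m > c there exist a finite nonempty set J of indices of T and a finite (possibly empty) set I of indices of S such that m = ∑_{j∈J} t_j + ∑_{i∈I} s_i. In particular, every integer greater than c is a sum of distinct terms of the combined sequence (s₁, t₁, s₂, t₂, …). -/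
/-- If `s` is a strictly increasing `Σ(k)`-sequence of positive integers and `t` is a
`(c,k)`-representable sequence of positive integers, then every integer greater than `c`
is a sum of distinct terms of the combined sequence. Sequences are indexed from `0`,
so `s 0` is the first term `s₁`. -/
theorem complete_of_sigma_and_representable
    (k : ℕ) (hk : 0 < k) (c : ℕ)
    (s : ℕ → ℕ) (hspos : ∀ i, 0 < s i) (hsmono : StrictMono s)
    (hs1 : s 0 ≤ k)
    (hsig : ∀ i, 1 ≤ i → s i ≤ k + ∑ j ∈ Finset.range i, s j)
    (t : ℕ → ℕ) (htpos : ∀ i, 0 < t i)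
    (hrep : ∀ x, 1 ≤ x → x ≤ k →
      ∃ J : Finset ℕ, J.Nonempty ∧ c + x = ∑ j ∈ J, t j) :
    ∀ m : ℕ, c < m →
      ∃ (J I : Finset ℕ), J.Nonempty ∧ m = ∑ j ∈ J, t j + ∑ i ∈ I, s i := by
  -- key lemma: any 1 ≤ x ≤ k + ∑_{j<n} s j is r + ∑_{i∈I} s i with 1 ≤ r ≤ k, I ⊆ range n
  have key : ∀ n : ℕ, ∀ x : ℕ, 1 ≤ x → x ≤ k + ∑ j ∈ Finset.range n, s j →
      ∃ r : ℕ, ∃ I : Finset ℕ, 1 ≤ r ∧ r ≤ k ∧ I ⊆ Finset.range n ∧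
        x = r + ∑ i ∈ I, s i := by
    intro n
    induction n with
    | zero =>
      intro x hx1 hx2
      simp at hx2
      exact ⟨x, ∅, hx1, hx2, by simp, by simp⟩
    | succ n ih =>
      intro x hx1 hx2
      by_cases h : x ≤ k + ∑ j ∈ Finset.range n, s j
      · obtain ⟨r, I, h1, h2, h3, h4⟩ := ih x hx1 h
        exact ⟨r, I, h1, h2, h3.trans (Finset.range_subset_range.mpr (Nat.le_succ n)), h4⟩
      · push_neg at h
        have hsn : s n ≤ k + ∑ j ∈ Finset.range n, s j := by
          rcases Nat.eq_zero_or_pos n with rfl | hn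
          · simpa using hs1.trans (Nat.le_add_right k 0)
          · exact hsig n hn
        have hlt : s n < x := lt_of_le_of_lt hsn h
        have h1 : 1 ≤ x - s n := by omega
        have h2 : x - s n ≤ k + ∑ j ∈ Finset.range n, s j := by
          rw [Finset.sum_range_succ] at hx2
          omega
        obtain ⟨r, I, hr1, hr2, hI, hx⟩ := ih (x - s n) h1 h2
        have hnI : n ∉ I := fun hmem => by
          simpa using hI hmem
        refine ⟨r, insert n I, hr1, hr2, ?_, ?_⟩
        · intro a ha
          rcases Finset.mem_insert.mp ha with rfl | ha
          · exact Finset.self_mem_range_succ a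
          · exact Finset.range_subset_range.mpr (Nat.le_succ n) (hI ha)
        · rw [Finset.sum_insert hnI]
          omega
  intro m hm
  set x := m - c with hxdef
  have hx1 : 1 ≤ x := by omega
  have hsum : x ≤ ∑ j ∈ Finset.range x, s j := by
    calc x = ∑ j ∈ Finset.range x, 1 := by simp
    _ ≤ ∑ j ∈ Finset.range x, s j := Finset.sum_le_sum fun i _ => hspos i
  obtain ⟨r, I, hr1, hr2, _, hx⟩ := key x x hx1 (by omega)
  obtain ⟨J, hJne, hJ⟩ := hrep r hr1 hr2
  exact ⟨J, I, hJne, by omega⟩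
end

section
/- Let n ≥ 2 be an integer, a = n!·2^(n²), and r = 2^(n²−n)·a. Then the following chain of inequalities holds (as real numbers): (r+1)^n / (r−1)^n < (a+2^n+1)^n / a^n < (2^n+2)^n / (2^n+1)^n ≤ 2. -/
set_option maxHeartbeats 1600000

private lemma two_mul_le_two_pow (n : ℕ) (hn : 2 ≤ n) : 2 * n ≤ 2 ^ n := by
  induction n with
  | zero => omega
  | succ m ih =>
    rcases Nat.lt_or_ge m 2 with hm | hm
    · interval_cases m <;> norm_num at *
    · have h2 : 2 ≤ 2 ^ m := Nat.one_lt_two_pow_iff.mpr (by omega)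
      have := ih hm
      calc 2 * (m + 1) = 2 * m + 2 := by ring
        _ ≤ 2 ^ m + 2 ^ m := by omega
        _ = 2 ^ (m + 1) := by ring

/-- For `n ≥ 2`, `a = n!·2^(n²)`, `r = 2^(n²-n)·a`, the chain of inequalities
`(r+1)^n/(r-1)^n < (a+2^n+1)^n/a^n < (2^n+2)^n/(2^n+1)^n ≤ 2` holds over the reals. -/
theorem ratio_chain_of_inequalities
    (n : ℕ) (hn : 2 ≤ n) (a r : ℕ)
    (ha : a = n.factorial * 2 ^ (n ^ 2))
    (hr : r = 2 ^ (n ^ 2 - n) * a) :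
    ((r : ℝ) + 1) ^ n / ((r : ℝ) - 1) ^ n < ((a : ℝ) + 2 ^ n + 1) ^ n / (a : ℝ) ^ n ∧
    ((a : ℝ) + 2 ^ n + 1) ^ n / (a : ℝ) ^ n < ((2 : ℝ) ^ n + 2) ^ n / ((2 : ℝ) ^ n + 1) ^ n ∧
    ((2 : ℝ) ^ n + 2) ^ n / ((2 : ℝ) ^ n + 1) ^ n ≤ 2 := by
  have hn0 : n ≠ 0 := by omega
  -- basic nat facts
  have hfact : 2 ≤ n.factorial := by
    calc 2 = Nat.factorial 2 := rfl
      _ ≤ n.factorial := Nat.factorial_le hn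
  have h2n : 2 * n ≤ n ^ 2 := by nlinarith
  have hnn : 2 ≤ n ^ 2 - n := by omega
  -- a ≥ 2 * (2^n)^2
  have haN : 2 * (2 ^ n) ^ 2 ≤ a := by
    rw [ha]
    have h1 : (2 ^ n : ℕ) ^ 2 = 2 ^ (2 * n) := by rw [← pow_mul, mul_comm]
    have h2 : (2 : ℕ) ^ (2 * n) ≤ 2 ^ (n ^ 2) := Nat.pow_le_pow_right (by norm_num) h2n
    calc 2 * (2 ^ n) ^ 2 = 2 * 2 ^ (2 * n) := by rw [h1]
      _ ≤ n.factorial * 2 ^ (n ^ 2) := Nat.mul_le_mul hfact h2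
  -- r ≥ 4 * a
  have hrN : 4 * a ≤ r := by
    rw [hr]
    have : (4 : ℕ) = 2 ^ 2 := rfl
    have h2 : (2 : ℕ) ^ 2 ≤ 2 ^ (n ^ 2 - n) := Nat.pow_le_pow_right (by norm_num) hnn
    calc 4 * a = 2 ^ 2 * a := by norm_num
      _ ≤ 2 ^ (n ^ 2 - n) * a := Nat.mul_le_mul_right a h2
  -- cast to ℝ
  set X : ℝ := (2 : ℝ) ^ n with hX
  clear_value X
  have hX4 : (4 : ℝ) ≤ X := by
    rw [hX]
    calc (4 : ℝ) = 2 ^ 2 := by norm_num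
      _ ≤ 2 ^ n := pow_le_pow_right₀ (by norm_num) hn
  have hXpos : (0 : ℝ) < X := by linarith
  have haR : 2 * X ^ 2 ≤ (a : ℝ) := by
    have h : ((2 * (2 ^ n) ^ 2 : ℕ) : ℝ) ≤ (a : ℝ) := Nat.cast_le.mpr haN
    push_cast at h
    rw [hX]
    linarith
  have hApos : (0 : ℝ) < (a : ℝ) := by nlinarith
  have hrR : 4 * (a : ℝ) ≤ (r : ℝ) := by exact_mod_cast hrN
  have hRm1 : (1 : ℝ) ≤ (r : ℝ) - 1 := by nlinarith
  have hRm1pos : (0 : ℝ) < (r : ℝ) - 1 := by linarith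
  refine ⟨?_, ?_, ?_⟩
  · -- first inequality
    rw [← div_pow, ← div_pow]
    refine pow_lt_pow_left₀ ?_ (by positivity) hn0
    rw [div_lt_div_iff₀ hRm1pos hApos]
    -- (r+1)*a < (a+X+1)*(r-1)
    nlinarith [hrR, haR, hX4, hApos]
  · -- second inequality
    rw [← div_pow, ← div_pow]
    refine pow_lt_pow_left₀ ?_ (by positivity) hn0
    have hX1 : (0 : ℝ) < X + 1 := by linarith
    rw [div_lt_div_iff₀ hApos hX1]
    nlinarith [haR, hX4]
  · -- third inequality
    set Y : ℝ := X + 1 with hYdef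
    clear_value Y
    have hY5 : (5 : ℝ) ≤ Y := by simp [hYdef]; linarith
    have hYpos : (0 : ℝ) < Y := by linarith
    have hY2n : 2 * (n : ℝ) ≤ Y := by
      have := two_mul_le_two_pow n hn
      have : ((2 * n : ℕ) : ℝ) ≤ ((2 ^ n : ℕ) : ℝ) := Nat.cast_le.mpr this
      push_cast at this
      simp only [hYdef, hX]
      linarith
    -- Bernoulli: 1 - n/Y ≤ (1 - 1/Y)^n
    have hb : 1 + (n : ℝ) * (-1 / Y) ≤ (1 + (-1 / Y)) ^ n := by
      apply one_add_mul_le_pow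
      have : -1 / Y ≥ -1 := by
        rw [ge_iff_le, neg_le, neg_div, neg_neg]
        rw [div_le_one hYpos]; linarith
      linarith
    have hkey : Y ^ n ≤ 2 * (Y - 1) ^ n := by
      have h1 : (1 + (-1 / Y)) = (Y - 1) / Y := by field_simp; ring
      have h2 : ((Y - 1) / Y) ^ n = (Y - 1) ^ n / Y ^ n := div_pow _ _ _
      have h3 : (1 : ℝ) / 2 ≤ 1 + (n : ℝ) * (-1 / Y) := by
        have hnY : (n : ℝ) / Y ≤ 1 / 2 := by
          rw [div_le_div_iff₀ hYpos (by norm_num)]; linarith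
        have : (n : ℝ) * (-1 / Y) = -((n : ℝ) / Y) := by ring
        rw [this]; linarith
      have h4 : (1 : ℝ) / 2 ≤ (Y - 1) ^ n / Y ^ n := by
        rw [← h2, ← h1]; linarith
      have hYn : (0 : ℝ) < Y ^ n := by positivity
      rw [le_div_iff₀ hYn] at h4
      linarith
    have hmain : (Y + 1) ^ n ≤ 2 * Y ^ n := by
      have hYm1 : (0 : ℝ) ≤ Y - 1 := by linarith
      have h5 : (Y + 1) ^ n * (Y - 1) ^ n = (Y ^ 2 - 1) ^ n := by
        rw [← mul_pow]; ring_nf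
      have hq1 : (0:ℝ) ≤ Y ^ 2 - 1 := by nlinarith
      have hq2 : (Y ^ 2 - 1 : ℝ) ≤ Y ^ 2 := by nlinarith
      have h6 : (Y ^ 2 - 1 : ℝ) ^ n ≤ (Y ^ 2) ^ n := pow_le_pow_left₀ hq1 hq2 n
      have h7 : ((Y : ℝ) ^ 2) ^ n = Y ^ n * Y ^ n := by rw [← pow_mul, two_mul, pow_add]
      -- (Y+1)^n * (Y-1)^n ≤ Y^n * Y^n  and  Y^n ≤ 2*(Y-1)^n
      have h8 : (Y + 1) ^ n * (Y - 1) ^ n ≤ Y ^ n * Y ^ n := by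
        rw [h5]; exact h6.trans_eq h7
      have hYn1 : (0 : ℝ) < (Y + 1) ^ n := by positivity
      -- multiply hkey-based bound
      nlinarith [mul_le_mul_of_nonneg_left hkey (le_of_lt hYn1), h8, pow_pos hYpos n]
    have hY1n : (0 : ℝ) < Y ^ n := by positivity
    have hshow : X + 2 = Y + 1 := by rw [hYdef]; ring
    rw [hshow, div_le_iff₀ hY1n]
    linarith
end

section
/- Let n ≥ 2 be an integer, a = n!·2^(n²), and r = 2^(n²−n)·a. Let W' be the set of positive integers m such that either (m < r and the residue of m modulo a does not lie in {1, 2, …, 2^n}) or (m ≥ r and m is even), and let w₁ < w₂ < w₃ < … be the increasing enumeration of the set {m^n : m ∈ W'}. Then w₁ ≤ a and w_k ≤ a + ∑_{j=1}^{k−1} w_j for all k ≥ 2; that is, (w₁, w₂, …) is a Σ(a)-sequence. -/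
private lemma aux_pow_succ (b k : ℕ) (hb : 2 ≤ b) :
    (b + 1) ^ (k + 1) ≤ b ^ (k + 1) + 2 ^ (k + 1) * b ^ k := by
  induction k with
  | zero => simp
  | succ k ih =>
    have h2 : 2 * b ^ k ≤ b ^ (k+1) := by
      rw [pow_succ]
      calc 2 * b ^ k = b ^ k * 2 := by ring
        _ ≤ b ^ k * b := Nat.mul_le_mul_left _ hb
    have h4 : (1:ℕ) ≤ 2 ^ k := Nat.one_le_two_pow
    calc (b+1)^(k+2) = (b+1)^(k+1) * (b+1) := by ring
      _ ≤ (b^(k+1) + 2^(k+1) * b^k) * (b+1) := Nat.mul_le_mul_right _ ih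
      _ = b^(k+2) + (b^(k+1) + 2^(k+1)*b^(k+1) + 2^(k+1)*b^k) := by ring
      _ ≤ b^(k+2) + 2^(k+2) * b^(k+1) := by
          have ha : b^(k+1) ≤ 2^k * b^(k+1) := Nat.le_mul_of_pos_left _ (by positivity)
          have hcc : 2^(k+1) * b^k ≤ 2^k * b^(k+1) := by
            calc 2^(k+1) * b^k = 2^k * (2 * b^k) := by ring
              _ ≤ 2^k * b^(k+1) := Nat.mul_le_mul_left _ h2
          have heq : 2^(k+2) * b^(k+1) = 2^(k+1) * b^(k+1) + 2^k * b^(k+1) + 2^k * b^(k+1) := by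
            ring
          omega

private lemma two_pow_succ_pow (n : ℕ) (hn : 1 ≤ n) : (2 ^ n + 1) ^ n ≤ 2 ^ (n ^ 2 + 1) := by
  obtain ⟨m, rfl⟩ : ∃ m, n = m + 1 := ⟨n - 1, by omega⟩
  calc (2 ^ (m+1) + 1) ^ (m+1)
      ≤ (2 ^ (m+1)) ^ (m+1) + 2 ^ (m+1) * (2 ^ (m+1)) ^ m :=
        aux_pow_succ (2 ^ (m+1)) m (by
          have : (2:ℕ)^1 ≤ 2^(m+1) := Nat.pow_le_pow_right (by norm_num) (by omega)
          simpa using this)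
    _ = 2 ^ ((m+1) ^ 2 + 1) := by
        rw [← pow_succ']
        rw [← pow_mul, pow_add, pow_two, pow_one]
        omega

private lemma two_pow_le_fact (n : ℕ) (hn : 4 ≤ n) : 2 ^ n ≤ n.factorial := by
  obtain ⟨m, rfl⟩ : ∃ m, n = m + 4 := ⟨n - 4, by omega⟩
  induction m with
  | zero => decide
  | succ m ih =>
    have h := ih (by omega)
    calc 2 ^ (m + 5) = 2 * 2 ^ (m+4) := by ring
      _ ≤ 2 * (m+4).factorial := by omega
      _ ≤ (m+5) * (m+4).factorial := Nat.mul_le_mul_right _ (by omega)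
      _ = (m + 4 + 1).factorial := rfl

private lemma sum_pow_le_sum_w {n : ℕ} (hn : 1 ≤ n) (W' : Set ℕ)
    (w : ℕ → ℕ) (hwmono : StrictMono w)
    (hwrange : Set.range w = {x | ∃ m ∈ W', x = m ^ n})
    (k M : ℕ) (hk : w k = M ^ n)
    {α : Type} [DecidableEq α] (F : Finset α) (f : α → ℕ)
    (hinj : Set.InjOn f F)
    (hmem : ∀ x ∈ F, f x ∈ W' ∧ f x < M) :
    ∑ x ∈ F, f x ^ n ≤ ∑ j ∈ Finset.range k, w j := by
  have hex : ∀ x ∈ F, ∃ j, w j = f x ^ n := by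
    intro x hx
    have h1 : f x ^ n ∈ Set.range w := by
      rw [hwrange]; exact ⟨f x, (hmem x hx).1, rfl⟩
    exact h1
  classical
  choose! φ hφ using hex
  have hφlt : ∀ x ∈ F, φ x < k := by
    intro x hx
    have h2 : w (φ x) < w k := by
      rw [hφ x hx, hk]
      exact Nat.pow_lt_pow_left (hmem x hx).2 (by omega)
    exact hwmono.lt_iff_lt.mp h2
  have hφinj : Set.InjOn φ F := by
    intro x hx y hy hxy
    have h3 : f x ^ n = f y ^ n := by rw [← hφ x hx, ← hφ y hy, hxy]
    have hfx : f x = f y := Nat.pow_left_injective (by omega) h3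
    exact hinj hx hy hfx
  calc ∑ x ∈ F, f x ^ n = ∑ x ∈ F, w (φ x) :=
        Finset.sum_congr rfl (fun x hx => (hφ x hx).symm)
    _ = ∑ j ∈ F.image φ, w j := (Finset.sum_image (fun x hx y hy h => hφinj hx hy h)).symm
    _ ≤ ∑ j ∈ Finset.range k, w j := Finset.sum_le_sum_of_subset (by
        intro j hj
        simp only [Finset.mem_image] at hj
        obtain ⟨x, hx, rfl⟩ := hj
        exact Finset.mem_range.mpr (hφlt x hx))

/-- With `a = n!·2^(n²)`, `r = 2^(n²-n)·a`, let `W'` consist of the positive integers `m`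
such that either `m < r` and the residue of `m` mod `a` is not in `{1,…,2^n}`, or `m ≥ r`
and `m` is even. If `w` is the increasing enumeration of `{m^n : m ∈ W'}` (indexed from `0`),
then `w` is a `Σ(a)`-sequence. -/
theorem W_is_sigma_a_sequence
    (n : ℕ) (hn : 2 ≤ n) (a r : ℕ)
    (ha : a = n.factorial * 2 ^ (n ^ 2))
    (hr : r = 2 ^ (n ^ 2 - n) * a)
    (W' : Set ℕ)
    (hW' : W' = {m | 0 < m ∧
      ((m < r ∧ ¬ (1 ≤ m % a ∧ m % a ≤ 2 ^ n)) ∨ (r ≤ m ∧ 2 ∣ m))})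
    (w : ℕ → ℕ) (hwmono : StrictMono w)
    (hwrange : Set.range w = {x | ∃ m ∈ W', x = m ^ n}) :
    w 0 ≤ a ∧ ∀ k, 1 ≤ k → w k ≤ a + ∑ j ∈ Finset.range k, w j := by
  -- basic numeric facts
  have hfac2 : 2 ≤ n.factorial := by
    calc 2 = Nat.factorial 2 := rfl
      _ ≤ n.factorial := Nat.factorial_le hn
  have hpw : ∀ {s t : ℕ}, s ≤ t → (2:ℕ)^s ≤ 2^t :=
    fun h => Nat.pow_le_pow_right (by norm_num) h
  have h2n2 : 2*n ≤ n^2 := by nlinarith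
  have hQ1 : (1:ℕ) ≤ 2^n := Nat.one_le_two_pow
  have hP2 : (2:ℕ)^(n+1) = 2*2^n := by rw [pow_succ]; ring
  have hP1 : (2:ℕ)^(n+1) ≤ 2^(n^2) := hpw (by omega)
  have h4le : (4:ℕ) ≤ 2^n := by
    calc (4:ℕ) = 2^2 := by norm_num
      _ ≤ 2^n := hpw hn
  have h2n' : (2:ℕ)^(2*n) ≤ 2^(n^2) := hpw h2n2
  have hf4 : (4:ℕ)^n = 2^(2*n) := by
    rw [pow_mul]; norm_num
  have h2nsq : (2:ℕ)^(2*n) = 2^n * 2^n := by rw [two_mul, pow_add]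
  have h8 : 4*2^n ≤ 2^n * 2^n := Nat.mul_le_mul_right _ h4le
  obtain ⟨A, haA⟩ : ∃ A, a = 2 * A := by
    refine ⟨n.factorial * 2^(n^2 - 1), ?_⟩
    have h1 : (2:ℕ)^(n^2) = 2^(n^2-1) * 2 := by
      rw [← pow_succ]; congr 1; omega
    rw [ha, h1]; ring
  have hA1 : 2^(n^2) ≤ A := by
    have h1 : 2 * 2^(n^2) ≤ a := by
      rw [ha]; exact Nat.mul_le_mul_right _ hfac2
    omega
  have hr4 : 4*a ≤ r := by
    rw [hr]
    have h1 : (2:ℕ)^2 ≤ 2^(n^2 - n) := hpw (by omega)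
    calc 4*a = 2^2 * a := by norm_num
      _ ≤ 2^(n^2-n) * a := Nat.mul_le_mul_right _ h1
  have hapos : 0 < a := by omega
  -- membership helpers
  have hWlow : ∀ m : ℕ, 2^n + 1 ≤ m → m ≤ a → m ∈ W' := by
    intro m h1 h2
    rw [hW']
    have hma : m % a = m ∨ m % a = 0 := by
      rcases eq_or_lt_of_le h2 with h | h
      · right; rw [h, Nat.mod_self]
      · left; exact Nat.mod_eq_of_lt h
    exact ⟨by omega, Or.inl ⟨by omega, by omega⟩⟩
  have hWeven : ∀ m : ℕ, 0 < m → 2 ∣ m → (m % a = 0 ∨ 2^n < m % a) → m ∈ W' := by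
    intro m h0 h2 h3; rw [hW']
    rcases lt_or_ge m r with h | h
    · exact ⟨h0, Or.inl ⟨h, by omega⟩⟩
    · exact ⟨h0, Or.inr ⟨h, h2⟩⟩
  have hmin : ∀ m ∈ W', 2^n + 1 ≤ m := by
    intro m hm; rw [hW'] at hm
    obtain ⟨h0, hm⟩ := hm
    by_contra hcon
    push_neg at hcon
    have hmr : m < a := by omega
    rcases hm with ⟨h1, h2⟩ | ⟨h1, h2⟩
    · rw [Nat.mod_eq_of_lt hmr] at h2; omega
    · omega
  have hidx : ∀ m ∈ W', ∃ j, w j = m ^ n := by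
    intro m hm
    have h1 : m ^ n ∈ Set.range w := by rw [hwrange]; exact ⟨m, hm, rfl⟩
    exact h1
  have hS : ∀ k : ℕ, ∃ m, m ∈ W' ∧ w k = m ^ n := by
    intro k
    have h1 : w k ∈ Set.range w := ⟨k, rfl⟩
    rw [hwrange] at h1
    obtain ⟨m, hm, he⟩ := h1
    exact ⟨m, hm, he⟩
  have hw0 : w 0 = (2^n+1)^n := by
    obtain ⟨m, hm, he⟩ := hS 0
    obtain ⟨j, hj⟩ := hidx (2^n+1) (hWlow (2^n+1) le_rfl (by omega))
    have h1 : w 0 ≤ w j := hwmono.monotone (Nat.zero_le j)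
    have h2 : (2^n+1)^n ≤ m^n := Nat.pow_le_pow_left (hmin m hm) n
    omega
  have hw0a : w 0 ≤ a := by
    rw [hw0]
    calc (2^n+1)^n ≤ 2^(n^2+1) := two_pow_succ_pow n (by omega)
      _ = 2 * 2^(n^2) := by rw [pow_succ]; ring
      _ ≤ a := by omega
  refine ⟨hw0a, ?_⟩
  intro k hk
  obtain ⟨M, hM, hkM⟩ := hS k
  have hMc : 2^n + 1 < M := by
    have h1 : w 0 < w k := hwmono (by omega)
    by_contra hcon
    push_neg at hcon
    have h2 : M ^ n ≤ (2^n+1)^n := Nat.pow_le_pow_left hcon n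
    rw [hw0] at h1; omega
  rw [hkM]
  rcases le_or_gt M (2^(n+1)) with hc1 | hc1
  · -- case 1 : 2^n + 1 < M ≤ 2^(n+1)
    have hkey : M ^ n ≤ a + (M - (2^n+1)) * (2^n+1)^n := by
      rcases Nat.lt_or_ge n 4 with hn4 | hn4
      · interval_cases n
        · subst ha
          norm_num at hc1 hMc ⊢
          interval_cases M <;> norm_num [Nat.factorial]
        · subst ha
          norm_num at hc1 hMc ⊢
          interval_cases M <;> norm_num [Nat.factorial]
      · have h1 : M ^ n ≤ a := by
          calc M ^ n ≤ (2^(n+1))^n := Nat.pow_le_pow_left hc1 n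
            _ = 2^n * 2^(n^2) := by
                rw [← pow_mul, ← pow_add]; congr 1; ring
            _ ≤ n.factorial * 2^(n^2) := Nat.mul_le_mul_right _ (two_pow_le_fact n hn4)
            _ = a := ha.symm
        omega
    have hmem : ∀ x ∈ Finset.Icc (2^n+1) (M-1), x ∈ W' ∧ x < M := by
      intro x hx
      rw [Finset.mem_Icc] at hx
      exact ⟨hWlow x hx.1 (by omega), by omega⟩
    have hsumle : ∑ x ∈ Finset.Icc (2^n+1) (M-1), x ^ n ≤ ∑ j ∈ Finset.range k, w j :=
      sum_pow_le_sum_w (by omega : 1 ≤ n) W' w hwmono hwrange k M hkM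
      (Finset.Icc (2^n+1) (M-1)) (fun y => y) (fun x _ y _ h => h) hmem
    have hcard : (Finset.Icc (2^n+1) (M-1)).card = M - (2^n+1) := by
      rw [Nat.card_Icc]; omega
    have hlb : (M - (2^n+1)) * (2^n+1)^n ≤ ∑ x ∈ Finset.Icc (2^n+1) (M-1), x^n := by
      have h1 := Finset.card_nsmul_le_sum (Finset.Icc (2^n+1) (M-1)) (fun x => x^n) ((2^n+1)^n)
        (fun x hx => Nat.pow_le_pow_left (Finset.mem_Icc.mp hx).1 n)
      rwa [hcard, smul_eq_mul] at h1
    omega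
  rcases le_or_gt M a with hc2 | hc2
  · -- case 2 : 2^(n+1) < M ≤ a
    set h := (M+1)/2 with hh
    have hmem : ∀ x ∈ Finset.Icc h (M-1), x ∈ W' ∧ x < M := by
      intro x hx
      rw [Finset.mem_Icc] at hx
      exact ⟨hWlow x (by omega) (by omega), by omega⟩
    have hsumle : ∑ x ∈ Finset.Icc h (M-1), x ^ n ≤ ∑ j ∈ Finset.range k, w j :=
      sum_pow_le_sum_w (by omega : 1 ≤ n) W' w hwmono hwrange k M hkM
      (Finset.Icc h (M-1)) (fun y => y) (fun x _ y _ hxy => hxy) hmem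
    have hcard : (Finset.Icc h (M-1)).card = M - h := by
      rw [Nat.card_Icc]; omega
    have hlb : (M - h) * h^n ≤ ∑ x ∈ Finset.Icc h (M-1), x^n := by
      have h1 := Finset.card_nsmul_le_sum (Finset.Icc h (M-1)) (fun x => x^n) (h^n)
        (fun x hx => Nat.pow_le_pow_left (Finset.mem_Icc.mp hx).1 n)
      rwa [hcard, smul_eq_mul] at h1
    have hchain : M ^ n ≤ (M - h) * h^n := by
      calc M ^ n ≤ (2*h)^n := Nat.pow_le_pow_left (by omega) n
        _ = 2^n * h^n := mul_pow 2 h n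
        _ ≤ (M - h) * h^n := Nat.mul_le_mul_right _ (by omega)
    omega
  rcases lt_or_ge M (2*a) with hc3 | hc3
  · -- case 3 : a < M < 2a
    have hmem : ∀ x ∈ Finset.Icc A (a-1), x ∈ W' ∧ x < M := by
      intro x hx
      rw [Finset.mem_Icc] at hx
      exact ⟨hWlow x (by omega) (by omega), by omega⟩
    have hsumle : ∑ x ∈ Finset.Icc A (a-1), x ^ n ≤ ∑ j ∈ Finset.range k, w j :=
      sum_pow_le_sum_w (by omega : 1 ≤ n) W' w hwmono hwrange k M hkM
      (Finset.Icc A (a-1)) (fun y => y) (fun x _ y _ hxy => hxy) hmem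
    have hcard : (Finset.Icc A (a-1)).card = A := by
      rw [Nat.card_Icc]; omega
    have hlb : A * A^n ≤ ∑ x ∈ Finset.Icc A (a-1), x^n := by
      have h1 := Finset.card_nsmul_le_sum (Finset.Icc A (a-1)) (fun x => x^n) (A^n)
        (fun x hx => Nat.pow_le_pow_left (Finset.mem_Icc.mp hx).1 n)
      rwa [hcard, smul_eq_mul] at h1
    have hchain : M ^ n ≤ A * A^n := by
      calc M ^ n ≤ (4*A)^n := Nat.pow_le_pow_left (by omega) n
        _ = 4^n * A^n := mul_pow 4 A n
        _ ≤ A * A^n := Nat.mul_le_mul_right _ (by omega)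
    omega
  rcases lt_or_ge M (4*a) with hc4 | hc4
  · -- case 4 : 2a ≤ M < 4a
    have hmem : ∀ x ∈ Finset.Icc (a + 2^n + 1) (2*a-1), x ∈ W' ∧ x < M := by
      intro x hx
      rw [Finset.mem_Icc] at hx
      have hmod : x % a = x - a := by
        rw [Nat.mod_eq_sub_mod (by omega)]
        exact Nat.mod_eq_of_lt (by omega)
      refine ⟨?_, by omega⟩
      rw [hW']
      exact ⟨by omega, Or.inl ⟨by omega, by omega⟩⟩
    have hsumle : ∑ x ∈ Finset.Icc (a + 2^n + 1) (2*a-1), x ^ n ≤ ∑ j ∈ Finset.range k, w j :=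
      sum_pow_le_sum_w (by omega : 1 ≤ n) W' w hwmono hwrange k M hkM
      (Finset.Icc (a + 2^n + 1) (2*a-1)) (fun y => y) (fun x _ y _ hxy => hxy) hmem
    have hcard : (Finset.Icc (a + 2^n + 1) (2*a-1)).card = a - 2^n - 1 := by
      rw [Nat.card_Icc]; omega
    have hlb : (a - 2^n - 1) * a^n ≤ ∑ x ∈ Finset.Icc (a + 2^n + 1) (2*a-1), x^n := by
      have h1 := Finset.card_nsmul_le_sum (Finset.Icc (a + 2^n + 1) (2*a-1)) (fun x => x^n) (a^n)
        (fun x hx => Nat.pow_le_pow_left (by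
          have := (Finset.mem_Icc.mp hx).1; omega) n)
      rwa [hcard, smul_eq_mul] at h1
    have hchain : M ^ n ≤ (a - 2^n - 1) * a^n := by
      calc M ^ n ≤ (4*a)^n := Nat.pow_le_pow_left (by omega) n
        _ = 4^n * a^n := mul_pow 4 a n
        _ ≤ (a - 2^n - 1) * a^n := Nat.mul_le_mul_right _ (by omega)
    omega
  · -- case 5 : 4a ≤ M
    have h2apos : 0 < 2*a := by omega
    set u := M / (2*a) with hu
    have hu2 : 2 ≤ u := (Nat.le_div_iff_mul_le (by omega)).mpr (by omega)
    have h2ua : 2*(u*a) ≤ M := by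
      have h1 := Nat.div_mul_le_self M (2*a)
      have h2 : M / (2*a) * (2*a) = 2*(u*a) := by rw [← hu]; ring
      omega
    have hM2ua : M < 2*(u*a) + 2*a := by
      have h1 := Nat.div_add_mod M (2*a)
      have h2 : M % (2*a) < 2*a := Nat.mod_lt _ (by omega)
      have h3 : 2*a*(M/(2*a)) = 2*(u*a) := by rw [← hu]; ring
      omega
    have hM4ua : M ≤ 4*(u*a) := by
      have h1 : 2*a ≤ u*a := Nat.mul_le_mul_right a hu2
      omega
    have hp2 : (2:ℕ)^n = 2*2^(n-1) := by
      rw [← pow_succ']; congr 1; omega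
    have hp2' : (1:ℕ) ≤ 2^(n-1) := Nat.one_le_two_pow
    have hAp : 2^(n-1) + 2 ≤ A := by omega
    obtain ⟨K, hK⟩ : ∃ K, 2^n + 2 + 2*K = a := ⟨A - 2^(n-1) - 1, by omega⟩
    have hKpos : 1 ≤ K := by omega
    set F := (Finset.Ico u (2*u)) ×ˢ (Finset.range K) with hF
    have hmemF : ∀ p : ℕ × ℕ, p ∈ F → u ≤ p.1 ∧ p.1 < 2*u ∧ p.2 < K := by
      intro p hp
      rw [hF, Finset.mem_product, Finset.mem_Ico, Finset.mem_range] at hp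
      exact ⟨hp.1.1, hp.1.2, hp.2⟩
    have hinj : Set.InjOn (fun p : ℕ × ℕ => 2^n + 2 + 2*p.2 + p.1 * a) F := by
      intro p hp q hq hfq
      have hp' := hmemF p hp
      have hq' := hmemF q hq
      simp only at hfq
      have hres : (2^n + 2 + 2*p.2) % a = (2^n + 2 + 2*q.2) % a := by
        have h1 := congrArg (· % a) hfq
        simpa [Nat.add_mul_mod_self_right] using h1
      rw [Nat.mod_eq_of_lt (by omega), Nat.mod_eq_of_lt (by omega)] at hres
      have h2 : p.2 = q.2 := by omega
      have h1 : p.1 = q.1 := by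
        have h3 : p.1 * a = q.1 * a := by omega
        exact Nat.eq_of_mul_eq_mul_right hapos h3
      exact Prod.ext h1 h2
    have hmem : ∀ p ∈ F, (fun p : ℕ × ℕ => 2^n + 2 + 2*p.2 + p.1 * a) p ∈ W' ∧
        (fun p : ℕ × ℕ => 2^n + 2 + 2*p.2 + p.1 * a) p < M := by
      intro p hp
      have hp' := hmemF p hp
      simp only
      have h5 : p.1 * a + a ≤ 2*(u*a) := by
        have h6 : (p.1 + 1) * a ≤ (2*u) * a := Nat.mul_le_mul_right a (by omega)
        have h7 : (p.1+1)*a = p.1*a + a := by ring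
        have h8 : (2*u)*a = 2*(u*a) := by ring
        omega
      refine ⟨?_, by omega⟩
      apply hWeven
      · omega
      · exact ⟨2^(n-1) + 1 + p.2 + p.1 * A, by rw [haA, hp2]; ring⟩
      · right
        have h7 : (2^n + 2 + 2*p.2 + p.1 * a) % a = (2^n + 2 + 2*p.2) % a :=
          Nat.add_mul_mod_self_right _ _ _
        have h8 : 2^n + 2 + 2*p.2 < a := by omega
        rw [Nat.mod_eq_of_lt h8] at h7
        omega
    have hsumle : ∑ p ∈ F, (2^n + 2 + 2*p.2 + p.1 * a) ^ n ≤ ∑ j ∈ Finset.range k, w j :=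
      sum_pow_le_sum_w (by omega : 1 ≤ n) W' w hwmono hwrange k M hkM
      F (fun p : ℕ × ℕ => 2^n + 2 + 2*p.2 + p.1 * a) hinj hmem
    have hcard : F.card = u * K := by
      rw [hF, Finset.card_product, Nat.card_Ico, Finset.card_range]
      have h1 : 2*u - u = u := by omega
      rw [h1]
    have hlb : (u * K) * (u*a)^n ≤ ∑ p ∈ F, (2^n + 2 + 2*p.2 + p.1 * a) ^ n := by
      have h1 := Finset.card_nsmul_le_sum F
        (fun p : ℕ × ℕ => (2^n + 2 + 2*p.2 + p.1 * a) ^ n) ((u*a)^n)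
        (fun p hp => Nat.pow_le_pow_left (by
          have hp' := hmemF p hp
          have h2 : u * a ≤ p.1 * a := Nat.mul_le_mul_right a hp'.1
          omega) n)
      rwa [hcard, smul_eq_mul] at h1
    have h4K : 4^n ≤ u * K := by
      have h1 : 2*K ≤ u*K := Nat.mul_le_mul_right K hu2
      omega
    have hchain : M ^ n ≤ (u * K) * (u*a)^n := by
      calc M ^ n ≤ (4*(u*a))^n := Nat.pow_le_pow_left hM4ua n
        _ = 4^n * (u*a)^n := mul_pow 4 (u*a) n
        _ ≤ (u * K) * (u*a)^n := Nat.mul_le_mul_right _ h4K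
    omega
end

section
/- Let n ≥ 2 be an integer and a = n!·2^(n²), and let B₁ = {α·a + β : α, β integers, 0 ≤ α ≤ 2^(n²−n)−1, 1 ≤ β ≤ 2^n}. Then the sums of n-th powers over nonempty subsets of B₁ contain a complete residue system modulo a: for every integer t there exists a finite nonempty set F ⊆ B₁ such that ∑_{m∈F} m^n ≡ t (mod a). -/
open Finset

private lemma digit_rep (b : ℕ) (hb : 0 < b) :
    ∀ k, ∀ r < b ^ k, ∃ c : ℕ → ℕ, (∀ j, c j < b) ∧ ∑ j ∈ range k, c j * b ^ j = r := by
  intro k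
  induction k with
  | zero =>
    intro r hr
    refine ⟨fun _ => 0, fun _ => hb, ?_⟩
    simp at hr ⊢
    omega
  | succ k ih =>
    intro r hr
    have hdiv : r / b < b ^ k := by
      rw [Nat.div_lt_iff_lt_mul hb]
      rwa [pow_succ] at hr
    obtain ⟨c, hc, hsum⟩ := ih (r / b) hdiv
    refine ⟨fun j => if j = 0 then r % b else c (j - 1), fun j => ?_, ?_⟩
    · by_cases h : j = 0
      · simpa [h] using Nat.mod_lt r hb
      · simpa [h] using hc (j - 1)
    · rw [Finset.sum_range_succ']
      simp only [if_pos rfl, pow_zero, mul_one]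
      have h2 : ∀ i ∈ range k, (if i + 1 = 0 then r % b else c (i + 1 - 1)) * b ^ (i + 1)
          = b * (c i * b ^ i) := by
        intro i _
        simp [pow_succ]
        ring
      rw [Finset.sum_congr rfl h2, ← Finset.mul_sum, hsum]
      simp only [if_true]
      have := Nat.div_add_mod r b
      omega

/-- With `a = n!·2^(n²)` and `B₁ = {α·a + β : 0 ≤ α ≤ 2^(n²-n)-1, 1 ≤ β ≤ 2^n}`, the sums
of `n`-th powers over nonempty subsets of `B₁` contain a complete residue system mod `a`. -/
theorem powers_of_B1_complete_residue_system
    (n : ℕ) (hn : 2 ≤ n) (a : ℕ)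
    (ha : a = n.factorial * 2 ^ (n ^ 2))
    (B1 : Set ℕ)
    (hB1 : B1 = {m | ∃ α β : ℕ, α ≤ 2 ^ (n ^ 2 - n) - 1 ∧ 1 ≤ β ∧ β ≤ 2 ^ n ∧
      m = α * a + β}) :
    ∀ t : ℤ, ∃ F : Finset ℕ, (↑F : Set ℕ) ⊆ B1 ∧ F.Nonempty ∧
      (∑ m ∈ F, (m : ℤ) ^ n) ≡ t [ZMOD (a : ℤ)] := by
  intro t
  have hpow2 : ∀ m : ℕ, 0 < 2 ^ m := fun m => pow_pos (by norm_num) m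
  have ap : 0 < a := by
    rw [ha]; exact Nat.mul_pos n.factorial_pos (hpow2 _)
  have hnn : n ≤ n ^ 2 - n := by
    have : n * 2 ≤ n * n := Nat.mul_le_mul_left n hn
    rw [pow_two]; omega
  have hfac : n.factorial ≤ 2 ^ (n ^ 2 - n) := by
    calc n.factorial ≤ n ^ n := Nat.factorial_le_pow n
      _ ≤ (2 ^ (n - 1)) ^ n := Nat.pow_le_pow_left (by
          have := Nat.lt_two_pow_self (n := n - 1); omega) n
      _ = 2 ^ ((n - 1) * n) := by rw [← pow_mul]
      _ = 2 ^ (n ^ 2 - n) := by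
          congr 1
          rw [pow_two, Nat.sub_mul, one_mul]
  have h2na : 2 ^ n < a := by
    have h1 : 2 ^ n < 2 ^ (n ^ 2) := by
      apply Nat.pow_lt_pow_right (by norm_num)
      have : n * 2 ≤ n * n := Nat.mul_le_mul_left n hn
      rw [pow_two]; omega
    calc 2 ^ n < 2 ^ (n ^ 2) := h1
      _ ≤ n.factorial * 2 ^ (n ^ 2) := Nat.le_mul_of_pos_left _ n.factorial_pos
      _ = a := ha.symm
  -- target residue
  set T : ℕ := if t % (a : ℤ) = 0 then a else (t % (a : ℤ)).toNat with hT
  have haz : (a : ℤ) ≠ 0 := by exact_mod_cast ap.ne'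
  have hmodnn : 0 ≤ t % (a : ℤ) := Int.emod_nonneg t haz
  have hmodlt : t % (a : ℤ) < a := Int.emod_lt_of_pos t (by exact_mod_cast ap)
  have hT1 : 1 ≤ T := by
    rw [hT]; split <;> omega
  have hTa : T ≤ a := by
    rw [hT]; split <;> omega
  have hTmod : (T : ℤ) % (a : ℤ) = t % (a : ℤ) := by
    rw [hT]
    split
    · rename_i h
      simp [h, Int.emod_self]
    · rw [Int.toNat_of_nonneg hmodnn]
      exact Int.emod_emod_of_dvd t dvd_rfl
  -- digits
  set q : ℕ := T / 2 ^ (n ^ 2) with hqdef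
  set r : ℕ := T % 2 ^ (n ^ 2) with hrdef
  have hq : q ≤ 2 ^ (n ^ 2 - n) := by
    calc q ≤ a / 2 ^ (n ^ 2) := Nat.div_le_div_right hTa
      _ = n.factorial := by rw [ha, Nat.mul_div_cancel _ (hpow2 _)]
      _ ≤ 2 ^ (n ^ 2 - n) := hfac
  have hr : r < (2 ^ n) ^ n := by
    have : r < 2 ^ (n ^ 2) := Nat.mod_lt T (hpow2 _)
    rwa [pow_two, pow_mul] at this
  obtain ⟨c, hc, hcsum⟩ := digit_rep (2 ^ n) (hpow2 n) n r hr
  set d : ℕ → ℕ := fun j => if j = n then q else c j with hd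
  have hdle : ∀ j, d j ≤ 2 ^ (n ^ 2 - n) := by
    intro j
    simp only [hd]
    split
    · exact hq
    · exact le_trans (hc j).le (Nat.pow_le_pow_right (by norm_num) hnn)
  have hsumd : ∑ j ∈ range (n + 1), d j * 2 ^ (j * n) = T := by
    rw [Finset.sum_range_succ]
    have h1 : ∀ i ∈ range n, d i * 2 ^ (i * n) = c i * (2 ^ n) ^ i := by
      intro i hi
      rw [hd]
      simp only [if_neg (Nat.ne_of_lt (mem_range.mp hi))]
      rw [pow_mul']
    rw [Finset.sum_congr rfl h1, hcsum]
    have : d n = q := by rw [hd]; simp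
    rw [this]
    have h2 : 2 ^ (n * n) = 2 ^ (n ^ 2) := by rw [pow_two]
    rw [h2, hrdef, hqdef, mul_comm]
    exact Nat.mod_add_div T (2 ^ (n ^ 2))
  -- the finset
  set S : Finset ((_ : ℕ) × ℕ) := (range (n + 1)).sigma fun j => range (d j) with hS
  set f : ((_ : ℕ) × ℕ) → ℕ := fun p => p.2 * a + 2 ^ p.1 with hf
  have hmem : ∀ p ∈ S, p.1 ≤ n ∧ p.2 < d p.1 := by
    intro p hp
    rw [hS, Finset.mem_sigma] at hp
    exact ⟨Nat.lt_succ_iff.mp (mem_range.mp hp.1), mem_range.mp hp.2⟩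
  have hinj : ∀ p ∈ S, ∀ p' ∈ S, f p = f p' → p = p' := by
    intro p hp p' hp' hfe
    obtain ⟨j₁, α₁⟩ := p
    obtain ⟨j₂, α₂⟩ := p'
    have h1 : 2 ^ j₁ < a := lt_of_le_of_lt (Nat.pow_le_pow_right (by norm_num) (hmem _ hp).1) h2na
    have h2 : 2 ^ j₂ < a := lt_of_le_of_lt (Nat.pow_le_pow_right (by norm_num) (hmem _ hp').1) h2na
    rw [hf] at hfe
    simp only at hfe
    have hm : 2 ^ j₁ = 2 ^ j₂ := by
      have e1 : (α₁ * a + 2 ^ j₁) % a = 2 ^ j₁ := by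
        rw [add_comm, Nat.add_mul_mod_self_right]; exact Nat.mod_eq_of_lt h1
      have e2 : (α₂ * a + 2 ^ j₂) % a = 2 ^ j₂ := by
        rw [add_comm, Nat.add_mul_mod_self_right]; exact Nat.mod_eq_of_lt h2
      rw [← e1, ← e2, hfe]
    have hj : j₁ = j₂ := Nat.pow_right_injective (le_refl 2) hm
    subst hj
    have : α₁ = α₂ := by
      have := Nat.eq_of_mul_eq_mul_right ap (by omega : α₁ * a = α₂ * a)
      exact this
    simp [this]
  refine ⟨S.image f, ?_, ?_, ?_⟩
  · -- subset of B1
    intro m hm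
    simp only [Finset.coe_image, Set.mem_image, Finset.mem_coe] at hm
    obtain ⟨p, hp, hpm⟩ := hm
    rw [hB1]
    refine ⟨p.2, 2 ^ p.1, ?_, Nat.one_le_two_pow, Nat.pow_le_pow_right (by norm_num) (hmem _ hp).1, hpm.symm⟩
    have := (hmem _ hp).2
    have := hdle p.1
    omega
  · -- nonempty
    have : ∃ j ∈ range (n + 1), d j ≠ 0 := by
      by_contra hcon
      push_neg at hcon
      have : ∑ j ∈ range (n + 1), d j * 2 ^ (j * n) = 0 :=
        Finset.sum_eq_zero fun j hj => by rw [hcon j hj]; ring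
      omega
    obtain ⟨j, hj, hdj⟩ := this
    exact Finset.Nonempty.image ⟨⟨j, 0⟩, by
      rw [hS, Finset.mem_sigma]
      exact ⟨hj, mem_range.mpr (Nat.pos_of_ne_zero hdj)⟩⟩ f
  · -- the congruence
    rw [← ZMod.intCast_eq_intCast_iff]
    push_cast
    rw [Finset.sum_image hinj]
    have hterm : ∀ p ∈ S, ((f p : ℕ) : ZMod a) ^ n = ((2 : ZMod a) ^ p.1) ^ n := by
      intro p hp
      rw [hf]
      push_cast
      rw [ZMod.natCast_self]
      ring
    rw [Finset.sum_congr rfl hterm]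
    rw [hS, Finset.sum_sigma]
    simp only [Finset.sum_const, Finset.card_range, nsmul_eq_mul]
    have : ∀ j ∈ range (n + 1), (d j : ZMod a) * ((2 : ZMod a) ^ j) ^ n
        = ((d j * 2 ^ (j * n) : ℕ) : ZMod a) := by
      intro j hj
      push_cast
      rw [← pow_mul]
    rw [Finset.sum_congr rfl this, ← Nat.cast_sum, hsumd]
    have : ((T : ℕ) : ZMod a) = ((T : ℤ) : ZMod a) := by push_cast; ring
    rw [this, ZMod.intCast_eq_intCast_iff]
    exact hTmod
end

section
/- Let n ≥ 2 be an integer. Then every integer m with 1 ≤ m ≤ 2^(n²−n)·(1^n + 2^n + 3^n + ⋯ + (2^n)^n) can be written as m = ∑_{j=1}^{2^n} c_j·j^n for some integers c_j with 0 ≤ c_j ≤ 2^(n²−n) for each j. -/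
theorem aux_rep (n : ℕ) (hn : 2 ≤ n) :
    ∀ k m : ℕ, m ≤ 2 ^ (n ^ 2 - n) * ∑ j ∈ Finset.Icc 1 k, j ^ n →
    ∃ c : ℕ → ℕ, (∀ j, c j ≤ 2 ^ (n ^ 2 - n)) ∧
      m = ∑ j ∈ Finset.Icc 1 k, c j * j ^ n := by
  have hBn : 2 ^ n ≤ 2 ^ (n ^ 2 - n) := by
    apply Nat.pow_le_pow_right (by norm_num)
    have h2 : n ^ 2 = n * n := sq n
    have h3 : 2 * n ≤ n * n := Nat.mul_le_mul_right n hn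
    omega
  intro k
  induction k with
  | zero =>
    intro m hm
    simp at hm
    exact ⟨fun _ => 0, fun j => Nat.zero_le _, by simp [hm]⟩
  | succ k ih =>
    intro m hm
    set B := 2 ^ (n ^ 2 - n) with hB
    have hsum : ∑ j ∈ Finset.Icc 1 (k+1), j ^ n
        = (∑ j ∈ Finset.Icc 1 k, j ^ n) + (k+1)^n :=
      Finset.sum_Icc_succ_top (by omega) _
    have hpos : 0 < (k+1)^n := pow_pos (Nat.succ_pos k) n
    have hcongr : ∀ (c : ℕ → ℕ) (q : ℕ),
        ∑ j ∈ Finset.Icc 1 k, Function.update c (k+1) q j * j ^ n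
          = ∑ j ∈ Finset.Icc 1 k, c j * j ^ n := by
      intro c q
      apply Finset.sum_congr rfl
      intro j hj
      have hjne : j ≠ k+1 := by simp [Finset.mem_Icc] at hj; omega
      rw [Function.update_of_ne hjne]
    by_cases hcase : B * (k+1)^n ≤ m
    · obtain ⟨c, hc1, hc3⟩ := ih (m - B * (k+1)^n) (by
        rw [hsum, Nat.mul_add] at hm; omega)
      refine ⟨Function.update c (k+1) B, ?_, ?_⟩
      · intro j
        rcases eq_or_ne j (k+1) with h | h
        · subst h; rw [Function.update_self]
        · rw [Function.update_of_ne h]; exact hc1 j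
      · rw [Finset.sum_Icc_succ_top (by omega : 1 ≤ k+1), Function.update_self,
          hcongr]
        omega
    · push_neg at hcase
      set q := m / (k+1)^n with hq
      set r := m % (k+1)^n with hr
      have hqB : q ≤ B := by
        have : q < B := (Nat.div_lt_iff_lt_mul hpos).mpr hcase
        omega
      have hrlt : r < (k+1)^n := Nat.mod_lt _ hpos
      have hrle : r ≤ B * ∑ j ∈ Finset.Icc 1 k, j ^ n := by
        rcases Nat.eq_zero_or_pos k with hk0 | hk1
        · subst hk0
          simp at hrlt
          simp [hrlt]
        · have h1 : (k+1)^n ≤ 2^n * k^n := by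
            calc (k+1)^n ≤ (2*k)^n := Nat.pow_le_pow_left (by omega) n
            _ = 2^n * k^n := mul_pow 2 k n
          have h2 : k^n ≤ ∑ j ∈ Finset.Icc 1 k, j ^ n := by
            apply Finset.single_le_sum (f := fun j => j ^ n)
              (fun i _ => Nat.zero_le _)
            simp [Finset.mem_Icc]; omega
          exact le_of_lt (lt_of_lt_of_le hrlt (le_trans h1 (Nat.mul_le_mul hBn h2)))
      obtain ⟨c, hc1, hc3⟩ := ih r hrle
      refine ⟨Function.update c (k+1) q, ?_, ?_⟩
      · intro j
        rcases eq_or_ne j (k+1) with h | h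
        · subst h; rw [Function.update_self]; exact hqB
        · rw [Function.update_of_ne h]; exact hc1 j
      · rw [Finset.sum_Icc_succ_top (by omega : 1 ≤ k+1), Function.update_self,
          hcongr]
        have hdm := Nat.div_add_mod m ((k+1)^n)
        rw [← hq, ← hr, Nat.mul_comm] at hdm
        omega

/-- For `n ≥ 2`, every integer `m` with `1 ≤ m ≤ 2^(n²-n)·(1^n + 2^n + ⋯ + (2^n)^n)` can be
written as `m = ∑_{j=1}^{2^n} c_j · j^n` with `0 ≤ c_j ≤ 2^(n²-n)` for each `j`. -/
theorem representation_with_bounded_coefficients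
    (n : ℕ) (hn : 2 ≤ n) (m : ℕ)
    (hm1 : 1 ≤ m)
    (hm2 : m ≤ 2 ^ (n ^ 2 - n) * ∑ j ∈ Finset.Icc 1 (2 ^ n), j ^ n) :
    ∃ c : ℕ → ℕ, (∀ j, c j ≤ 2 ^ (n ^ 2 - n)) ∧
      m = ∑ j ∈ Finset.Icc 1 (2 ^ n), c j * j ^ n := by
  exact aux_rep n hn (2 ^ n) m hm2
end

section
/- Define the operator Δ on functions g : ℤ → ℤ by (Δg)(x) = g(4x+2) − g(4x). Then for every integer n ≥ 1, the n-fold iterate Δⁿ applied to the function f(x) = x^n is the constant function with value n!·2^(n²); that is, (Δⁿ f)(x) = n!·2^(n²) for all integers x. -/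
private lemma delta_iter_sum (Δ : (ℤ → ℤ) → (ℤ → ℤ))
    (hΔ : ∀ (g : ℤ → ℤ) (x : ℤ), Δ g x = g (4 * x + 2) - g (4 * x)) :
    ∀ (k m : ℕ) (c : ℕ → ℤ) (g : ℕ → ℤ → ℤ) (x : ℤ),
    Δ^[k] (fun y => ∑ j ∈ Finset.range m, c j * g j y) x
      = ∑ j ∈ Finset.range m, c j * Δ^[k] (g j) x := by
  intro k
  induction k with
  | zero => intro m c g x; simp
  | succ k ih =>
    intro m c g x
    rw [Function.iterate_succ_apply]
    have h1 : Δ (fun y => ∑ j ∈ Finset.range m, c j * g j y)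
        = fun y => ∑ j ∈ Finset.range m, c j * Δ (g j) y := by
      funext y
      rw [hΔ, ← Finset.sum_sub_distrib]
      refine Finset.sum_congr rfl fun j _ => ?_
      rw [hΔ]; ring
    rw [h1]
    exact ih m c (fun j => Δ (g j)) x

private lemma delta_key (Δ : (ℤ → ℤ) → (ℤ → ℤ))
    (hΔ : ∀ (g : ℤ → ℤ) (x : ℤ), Δ g x = g (4 * x + 2) - g (4 * x)) :
    ∀ (n j : ℕ), j ≤ n → ∀ x : ℤ,
    Δ^[n] (fun y : ℤ => y ^ j) x
      = if j = n then (n.factorial : ℤ) * 2 ^ (n ^ 2) else 0 := by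
  intro n
  induction n with
  | zero => intro j hj x; interval_cases j; simp
  | succ n ih =>
    intro j hj x
    rw [Function.iterate_succ_apply]
    have hD : Δ (fun y : ℤ => y ^ j)
        = fun y : ℤ => ∑ i ∈ Finset.range j,
            ((j.choose i : ℤ) * 4 ^ i * 2 ^ (j - i)) * y ^ i := by
      funext y
      rw [hΔ]
      have hb : (4 * y + 2) ^ j
          = ∑ i ∈ Finset.range (j + 1), (4 * y) ^ i * 2 ^ (j - i) * (j.choose i) :=
        add_pow _ _ _
      rw [hb, Finset.sum_range_succ, Nat.sub_self, Nat.choose_self]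
      simp only [pow_zero, mul_one, Nat.cast_one, add_sub_cancel_right]
      refine Finset.sum_congr rfl fun i _ => ?_
      rw [mul_pow]; ring
    rw [hD, delta_iter_sum Δ hΔ n j _ (fun i => fun y : ℤ => y ^ i) x]
    rw [Finset.sum_congr rfl (fun i hi => by
      rw [ih i (by have := Finset.mem_range.mp hi; omega) x])]
    simp only [mul_ite, mul_zero]
    rw [Finset.sum_ite_eq']
    by_cases hj' : j = n + 1
    · subst hj'
      rw [if_pos (Finset.mem_range.mpr (Nat.lt_succ_self n)), if_pos rfl]
      rw [Nat.choose_succ_self_right, Nat.add_sub_cancel_left, Nat.factorial_succ]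
      have h4 : (4 : ℤ) ^ n = 2 ^ (2 * n) := by
        rw [show (4 : ℤ) = 2 ^ 2 by norm_num, ← pow_mul]
      rw [h4, show (n + 1) ^ 2 = n ^ 2 + 2 * n + 1 by ring, pow_add, pow_add]
      push_cast
      ring
    · rw [if_neg (by simp only [Finset.mem_range]; omega), if_neg hj']

/-- Let `Δ` be the operator on functions `g : ℤ → ℤ` defined by
`(Δ g) x = g (4x+2) - g (4x)`. Then for `n ≥ 1`, the `n`-fold iterate of `Δ` applied to
`x ↦ x^n` is the constant function with value `n!·2^(n²)`. -/
theorem delta_iterate_of_power_is_constant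
    (Δ : (ℤ → ℤ) → (ℤ → ℤ))
    (hΔ : ∀ (g : ℤ → ℤ) (x : ℤ), Δ g x = g (4 * x + 2) - g (4 * x))
    (n : ℕ) (hn : 1 ≤ n) :
    ∀ x : ℤ, (Δ^[n] (fun y : ℤ => y ^ n)) x = n.factorial * 2 ^ (n ^ 2) := by
  intro x
  simpa using delta_key Δ hΔ n n le_rfl x
end

section
/- Let n ≥ 2 be an integer and define Δ on functions g : ℤ → ℤ by (Δg)(x) = g(4x+2) − g(4x). Then for every integer k with 1 ≤ k ≤ n there exist disjoint finite sets A and B of even nonnegative integers, each of cardinality 2^(k−1), with every element of A ∪ B at most (2/3)·(2^(2k)−1), such that for every integer x, (Δᵏ f)(x) = ∑_{α∈A} (2^(2k)·x + α)^n − ∑_{β∈B} (2^(2k)·x + β)^n, where f(x) = x^n. -/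
private lemma pow4_mod3 (k : ℕ) : ∃ m, 2 ^ (2 * k) = 3 * m + 1 := by
  induction k with
  | zero => exact ⟨0, rfl⟩
  | succ k ih =>
    obtain ⟨m, hm⟩ := ih
    refine ⟨4 * m + 1, ?_⟩
    rw [Nat.mul_succ, pow_add, hm]; ring

/-- Let `Δ` be the operator `(Δ g) x = g (4x+2) - g (4x)` on `g : ℤ → ℤ`, and `f x = x^n`
with `n ≥ 2`. For `1 ≤ k ≤ n` there are disjoint finite sets `A`, `B` of even nonnegative
integers, each of size `2^(k-1)`, all elements at most `(2/3)(2^(2k)-1)`, such that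
`(Δ^[k] f) x = ∑_{α ∈ A} (2^(2k)·x + α)^n - ∑_{β ∈ B} (2^(2k)·x + β)^n` for all `x`. -/
theorem delta_iterate_as_signed_power_sum
    (n : ℕ) (hn : 2 ≤ n)
    (Δ : (ℤ → ℤ) → (ℤ → ℤ))
    (hΔ : ∀ (g : ℤ → ℤ) (x : ℤ), Δ g x = g (4 * x + 2) - g (4 * x))
    (k : ℕ) (hk1 : 1 ≤ k) (hkn : k ≤ n) :
    ∃ A B : Finset ℕ, Disjoint A B ∧
      A.card = 2 ^ (k - 1) ∧ B.card = 2 ^ (k - 1) ∧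
      (∀ α ∈ A ∪ B, 2 ∣ α ∧ α ≤ 2 * (2 ^ (2 * k) - 1) / 3) ∧
      ∀ x : ℤ, (Δ^[k] (fun y : ℤ => y ^ n)) x =
        ∑ α ∈ A, (2 ^ (2 * k) * x + (α : ℤ)) ^ n -
          ∑ β ∈ B, (2 ^ (2 * k) * x + (β : ℤ)) ^ n := by
  clear hkn
  induction k, hk1 using Nat.le_induction with
  | base =>
    refine ⟨{2}, {0}, by decide, rfl, rfl, by decide, ?_⟩
    intro x
    simp only [Function.iterate_one, hΔ, Finset.sum_singleton]
    push_cast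
    ring
  | succ k hk ih =>
    obtain ⟨A, B, hAB, hcA, hcB, hbound, hsum⟩ := ih
    obtain ⟨m, hm⟩ := pow4_mod3 k
    set s := 2 ^ (2 * k + 1) with hs
    have hsval : s = 6 * m + 2 := by rw [hs, pow_succ, hm]; ring
    have hbd2 : ∀ a ∈ A ∪ B, 2 ∣ a ∧ a ≤ 2 * m := by
      intro a ha
      have h := hbound a ha
      rw [hm] at h
      exact ⟨h.1, by omega⟩
    have hinj : Function.Injective (· + s) := fun a b h => by simpa using h
    have hdisj_shift : ∀ (S T : Finset ℕ), T ⊆ A ∪ B →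
        Disjoint (S.image (· + s)) T := by
      intro S T hT
      rw [Finset.disjoint_left]
      rintro a ha haT
      obtain ⟨b, _, rfl⟩ := Finset.mem_image.mp ha
      have := (hbd2 _ (hT haT)).2
      omega
    have hcard : ∀ S : Finset ℕ, (S.image (· + s)).card = S.card :=
      fun S => Finset.card_image_of_injective S hinj
    have hpow : 2 ^ (k - 1) + 2 ^ (k - 1) = 2 ^ (k + 1 - 1) := by
      have h1 : k + 1 - 1 = (k - 1) + 1 := by omega
      rw [h1, pow_succ]; ring
    have hM : 2 * (2 ^ (2 * (k + 1)) - 1) / 3 = 8 * m + 2 := by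
      rw [Nat.mul_succ, pow_add, hm]; omega
    refine ⟨A.image (· + s) ∪ B, B.image (· + s) ∪ A, ?_, ?_, ?_, ?_, ?_⟩
    · simp only [Finset.disjoint_union_left, Finset.disjoint_union_right]
      exact ⟨⟨(Finset.disjoint_image hinj).mpr hAB,
          (hdisj_shift B B Finset.subset_union_right).symm⟩,
        hdisj_shift A A Finset.subset_union_left, hAB.symm⟩
    · rw [Finset.card_union_of_disjoint (hdisj_shift A B Finset.subset_union_right),
        hcard, hcA, hcB, hpow]
    · rw [Finset.card_union_of_disjoint (hdisj_shift B A Finset.subset_union_left),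
        hcard, hcA, hcB, hpow]
    · intro α hα
      rw [hM]
      simp only [Finset.mem_union, Finset.mem_image] at hα
      rcases hα with (⟨b, hb, rfl⟩ | hB) | (⟨b, hb, rfl⟩ | hA)
      · have := hbd2 b (Finset.mem_union_left _ hb); omega
      · have := hbd2 α (Finset.mem_union_right _ hB); omega
      · have := hbd2 b (Finset.mem_union_right _ hb); omega
      · have := hbd2 α (Finset.mem_union_left _ hA); omega
    · intro x
      have hp : (2 : ℤ) ^ (2 * (k + 1)) = 2 ^ (2 * k) * 4 := by
        rw [Nat.mul_succ, pow_add]; norm_num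
      have hps : (s : ℤ) = 2 ^ (2 * k) * 2 := by
        rw [hs]; push_cast [pow_succ]; ring
      have e1 : ∀ (S : Finset ℕ) (c : ℤ),
          ∑ a ∈ S.image (· + s), (2 ^ (2 * (k + 1)) * x + (a : ℤ)) ^ n =
          ∑ a ∈ S, (2 ^ (2 * k) * (4 * x + 2) + (a : ℤ)) ^ n := by
        intro S c
        rw [Finset.sum_image (fun a _ b _ h => hinj h)]
        refine Finset.sum_congr rfl fun a _ => ?_
        congr 1
        push_cast [hps, hp]
        ring
      have e2 : ∀ S : Finset ℕ,
          ∑ a ∈ S, (2 ^ (2 * (k + 1)) * x + (a : ℤ)) ^ n =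
          ∑ a ∈ S, (2 ^ (2 * k) * (4 * x) + (a : ℤ)) ^ n := by
        intro S
        refine Finset.sum_congr rfl fun a _ => ?_
        congr 1
        rw [hp]; ring
      rw [Function.iterate_succ_apply', hΔ, hsum, hsum,
        Finset.sum_union (hdisj_shift A B Finset.subset_union_right),
        Finset.sum_union (hdisj_shift B A Finset.subset_union_left),
        e1 A 0, e1 B 0, e2 A, e2 B]
      ring
end

section
/- Let n ≥ 2 be an integer. For every positive integer m there exist disjoint finite sets A and B, each contained in the arithmetic progression {m, m+2, m+4, …, m + (2/3)·(2^(2n)−1)}, such that ∑_{x∈A} x^n − ∑_{x∈B} x^n = n!·2^(n²). -/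
open Polynomial Finset

private lemma delta_degree_lt (P : Polynomial ℤ) (h : ℤ) (e : ℕ) (hP : P.natDegree ≤ e) :
    (P.comp (X + C h) - P).degree < (e : ℕ) := by
  rcases eq_or_ne (P.comp (X + C h) - P) 0 with h0 | h0
  · rw [h0, degree_zero]
    exact WithBot.bot_lt_coe e
  · have hPne : P ≠ 0 := by rintro rfl; simp at h0
    have hq1 : (X + C h).natDegree = 1 := natDegree_X_add_C h
    have hlc : (P.comp (X + C h)).leadingCoeff = P.leadingCoeff := by
      rw [leadingCoeff_comp (by rw [hq1]; norm_num), leadingCoeff_X_add_C, one_pow, mul_one]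
    have hcompne : P.comp (X + C h) ≠ 0 := by
      intro hc
      apply hPne
      rw [hc, leadingCoeff_zero] at hlc
      exact leadingCoeff_eq_zero.mp hlc.symm
    have hdeg : (P.comp (X + C h)).degree = P.degree := by
      rw [degree_eq_natDegree hcompne, degree_eq_natDegree hPne, natDegree_comp, hq1, mul_one]
    have h1 := degree_sub_lt hdeg hcompne hlc
    have h2 : (P.comp (X + C h)).degree ≤ (e : ℕ) := by
      rw [hdeg]
      exact degree_le_natDegree.trans (by exact_mod_cast hP)
    exact lt_of_lt_of_le (hdeg ▸ h1) h2

private lemma key_sum (b : ℕ → ℤ) (n : ℕ) (T : Finset ℕ) (hT : T.card ≤ n) :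
    ∃ P : Polynomial ℤ, P.natDegree ≤ n - T.card ∧
      P.coeff (n - T.card) = (n.descFactorial T.card : ℤ) * ∏ i ∈ T, b i ∧
      ∀ a : ℤ, ∑ S ∈ T.powerset, (-1 : ℤ) ^ (T.card - S.card) * (a + ∑ i ∈ S, b i) ^ n
        = P.eval a := by
  induction T using Finset.induction_on with
  | empty =>
    refine ⟨X ^ n, by simp, by simp, fun a => by simp⟩
  | @insert j T hj ih =>
    rw [card_insert_of_notMem hj] at hT
    obtain ⟨P, hdeg, hcoeff, heval⟩ := ih (by omega)
    set d := n - T.card with hd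
    have hd1 : 1 ≤ d := by omega
    have hdT : n - (insert j T).card = d - 1 := by
      rw [card_insert_of_notMem hj]; omega
    set h := b j
    refine ⟨P.comp (X + C h) - P, ?_, ?_, ?_⟩
    · -- degree bound
      rw [hdT]
      have hlt := delta_degree_lt P h d hdeg
      rcases eq_or_ne (P.comp (X + C h) - P) 0 with h0 | h0
      · rw [h0]; simp
      · have : (P.comp (X + C h) - P).natDegree < d := by
          have := (degree_eq_natDegree h0) ▸ hlt
          exact_mod_cast this
        omega
    · -- leading-ish coefficient
      rw [hdT]
      set c := P.coeff d with hc
      set R := P - C c * X ^ d with hR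
      have hRdeg : R.natDegree ≤ d - 1 := by
        rw [natDegree_le_iff_coeff_eq_zero]
        intro N hN
        have hN' : d ≤ N := by omega
        rcases eq_or_lt_of_le hN' with rfl | hlt
        · simp [hR, coeff_X_pow, hc]
        · have h1 : P.coeff N = 0 := coeff_eq_zero_of_natDegree_lt (lt_of_le_of_lt hdeg hlt)
          have h2 : ((X : Polynomial ℤ) ^ d).coeff N = 0 := by
            rw [coeff_X_pow, if_neg (by omega)]
          simp [hR, h1, h2]
      have hsplit : P.comp (X + C h) - P
          = C c * ((X + C h) ^ d - X ^ d) + (R.comp (X + C h) - R) := by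
        have hPd : P = C c * X ^ d + R := by rw [hR]; ring
        rw [hPd]
        simp only [add_comp, mul_comp, C_comp, pow_comp, X_comp]
        ring
      have hRzero : (R.comp (X + C h) - R).coeff (d - 1) = 0 :=
        coeff_eq_zero_of_degree_lt (delta_degree_lt R h (d - 1) hRdeg)
      have hbin : ((X + C h) ^ d).coeff (d - 1) = h * d := by
        rw [coeff_X_add_C_pow]
        have : d - (d - 1) = 1 := by omega
        rw [this, pow_one]
        rw [Nat.choose_symm hd1, Nat.choose_one_right]
      have hXd : ((X : Polynomial ℤ) ^ d).coeff (d - 1) = 0 := by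
        rw [coeff_X_pow, if_neg (by omega)]
      rw [hsplit, coeff_add, coeff_C_mul, coeff_sub, hbin, hXd, hRzero,
        card_insert_of_notMem hj, prod_insert hj, Nat.descFactorial_succ, hcoeff]
      push_cast [← hd]
      ring
    · -- evaluation
      intro a
      rw [powerset_insert, sum_union, sum_image]
      · have h1 : ∀ S ∈ T.powerset,
            (-1 : ℤ) ^ ((insert j T).card - (insert j S).card)
              * (a + ∑ i ∈ insert j S, b i) ^ n
            = (-1 : ℤ) ^ (T.card - S.card) * ((a + h) + ∑ i ∈ S, b i) ^ n := by
          intro S hS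
          rw [mem_powerset] at hS
          have hjS : j ∉ S := fun hmem => hj (hS hmem)
          rw [card_insert_of_notMem hj, card_insert_of_notMem hjS, sum_insert hjS]
          have : T.card + 1 - (S.card + 1) = T.card - S.card := by omega
          rw [this]
          rw [← add_assoc]
        have h2 : ∀ S ∈ T.powerset,
            (-1 : ℤ) ^ ((insert j T).card - S.card) * (a + ∑ i ∈ S, b i) ^ n
            = -((-1 : ℤ) ^ (T.card - S.card) * (a + ∑ i ∈ S, b i) ^ n) := by
          intro S hS
          rw [mem_powerset] at hS
          have hcard : S.card ≤ T.card := card_le_card hS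
          rw [card_insert_of_notMem hj]
          have : T.card + 1 - S.card = (T.card - S.card) + 1 := by omega
          rw [this, pow_succ]
          ring
        rw [sum_congr rfl h2, sum_congr rfl h1, heval (a + h), Finset.sum_neg_distrib,
          heval a, eval_sub, eval_comp]
        simp only [eval_add, eval_X, eval_C]
        ring
      · -- injectivity of insert on the powerset
        intro x hx y hy hxy
        rw [mem_coe, mem_powerset] at hx hy
        have hjx : j ∉ x := fun hmem => hj (hx hmem)
        have hjy : j ∉ y := fun hmem => hj (hy hmem)
        have := congrArg (fun s => Finset.erase s j) hxy
        simpa [Finset.erase_insert hjx, Finset.erase_insert hjy] using this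
      · -- disjointness
        rw [Finset.disjoint_right]
        intro S hS hS'
        rw [mem_image] at hS
        obtain ⟨S₀, hS₀, rfl⟩ := hS
        rw [mem_powerset] at hS'
        exact hj (hS' (mem_insert_self j S₀))

private lemma sum_odds (k : ℕ) : ∑ i ∈ range k, (2 * i + 1) = k ^ 2 := by
  induction k with
  | zero => simp
  | succ k ih => rw [Finset.sum_range_succ, ih]; ring

private lemma geom3 (k : ℕ) : 3 * ∑ i ∈ range k, 4 ^ i = 4 ^ k - 1 := by
  induction k with
  | zero => simp
  | succ k ih =>
    rw [Finset.sum_range_succ, Nat.mul_add, ih, pow_succ]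
    have : (1:ℕ) ≤ 4 ^ k := Nat.one_le_pow _ _ (by norm_num)
    omega

/-- For `n ≥ 2` and every positive integer `m`, there are disjoint finite subsets `A`, `B`
of the arithmetic progression `{m, m+2, …, m + (2/3)(2^(2n)-1)}` with
`∑_{x∈A} x^n - ∑_{x∈B} x^n = n!·2^(n²)`. -/
theorem a_in_A_of_progression
    (n : ℕ) (hn : 2 ≤ n) (m : ℕ) (hm : 0 < m) :
    ∃ A B : Finset ℕ, Disjoint A B ∧
      (↑A : Set ℕ) ⊆ {x | ∃ i : ℕ, i ≤ (2 ^ (2 * n) - 1) / 3 ∧ x = m + 2 * i} ∧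
      (↑B : Set ℕ) ⊆ {x | ∃ i : ℕ, i ≤ (2 ^ (2 * n) - 1) / 3 ∧ x = m + 2 * i} ∧
      (∑ x ∈ A, (x : ℤ) ^ n) - ∑ x ∈ B, (x : ℤ) ^ n =
        (n.factorial : ℤ) * 2 ^ (n ^ 2) := by
  set f : Finset ℕ → ℕ := fun S => m + 2 * ∑ i ∈ S, 4 ^ i with hf
  have hfinj : Function.Injective f := by
    intro S S' hSS
    have h4 : ∑ i ∈ S, 4 ^ i = ∑ i ∈ S', 4 ^ i := by
      simp only [hf] at hSS; omega
    exact Finset.geomSum_injective (by norm_num) h4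
  set b : ℕ → ℤ := fun i => (2 : ℤ) ^ (2 * i + 1) with hb
  obtain ⟨P, hdeg, hcoeff, heval⟩ := key_sum b n (range n) (by simp)
  have hfb : ∀ S : Finset ℕ, (m : ℤ) + ∑ i ∈ S, b i = (f S : ℤ) := by
    intro S
    simp only [hf, hb]
    push_cast
    rw [Finset.mul_sum]
    congr 1
    refine Finset.sum_congr rfl fun i _ => ?_
    rw [pow_succ, pow_mul]
    norm_num
    ring
  have hprod : ∏ i ∈ range n, b i = 2 ^ (n ^ 2) := by
    simp only [hb]
    rw [Finset.prod_pow_eq_pow_sum, sum_odds]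
  have hP0 : P.eval (m : ℤ) = (n.factorial : ℤ) * 2 ^ (n ^ 2) := by
    have h1 : P = C (P.coeff 0) := by
      apply eq_C_of_natDegree_le_zero
      simpa using hdeg
    rw [h1, eval_C]
    simpa [hprod, Nat.descFactorial_self] using hcoeff
  have hkey : ∑ S ∈ (range n).powerset, (-1 : ℤ) ^ (n - S.card) * (f S : ℤ) ^ n
      = (n.factorial : ℤ) * 2 ^ (n ^ 2) := by
    have h0 := heval (m : ℤ)
    rw [card_range] at h0
    rw [← hP0, ← h0]
    exact Finset.sum_congr rfl fun S _ => by rw [hfb]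
  have hbound : ∀ S : Finset ℕ, S ⊆ range n →
      ∑ i ∈ S, 4 ^ i ≤ (2 ^ (2 * n) - 1) / 3 := by
    intro S hS
    have h1 : ∑ i ∈ S, 4 ^ i ≤ ∑ i ∈ range n, 4 ^ i :=
      Finset.sum_le_sum_of_subset hS
    have h2 := geom3 n
    have h3 : (2 : ℕ) ^ (2 * n) = 4 ^ n := by rw [pow_mul]; norm_num
    have h4 : (1 : ℕ) ≤ 4 ^ n := Nat.one_le_pow _ _ (by norm_num)
    rw [Nat.le_div_iff_mul_le (by norm_num : (0:ℕ) < 3)]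
    omega
  refine ⟨((range n).powerset.filter (fun S => Even (n - S.card))).image f,
          ((range n).powerset.filter (fun S => ¬ Even (n - S.card))).image f,
          ?_, ?_, ?_, ?_⟩
  · rw [Finset.disjoint_image hfinj]
    exact Finset.disjoint_filter_filter_not _ _ _
  · intro x hx
    rw [Finset.mem_coe, Finset.mem_image] at hx
    obtain ⟨S, hS, rfl⟩ := hx
    rw [Finset.mem_filter, Finset.mem_powerset] at hS
    exact ⟨∑ i ∈ S, 4 ^ i, hbound S hS.1, rfl⟩
  · intro x hx
    rw [Finset.mem_coe, Finset.mem_image] at hx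
    obtain ⟨S, hS, rfl⟩ := hx
    rw [Finset.mem_filter, Finset.mem_powerset] at hS
    exact ⟨∑ i ∈ S, 4 ^ i, hbound S hS.1, rfl⟩
  · rw [Finset.sum_image (fun x _ y _ h => hfinj h),
      Finset.sum_image (fun x _ y _ h => hfinj h), ← hkey,
      ← Finset.sum_filter_add_sum_filter_not (range n).powerset
        (fun S => Even (n - S.card))]
    rw [sub_eq_add_neg]
    congr 1
    · refine Finset.sum_congr rfl fun S hS => ?_
      rw [Finset.mem_filter] at hS
      rw [Even.neg_one_pow hS.2, one_mul]
    · rw [← Finset.sum_neg_distrib]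
      refine Finset.sum_congr rfl fun S hS => ?_
      rw [Finset.mem_filter] at hS
      rw [Odd.neg_one_pow (Nat.not_even_iff_odd.mp hS.2)]
      ring
end

section
/- Let n ≥ 2 be an integer, a = n!·2^(n²), and r = 2^(n²−n)·a, and let T' = {m : m ≥ r, m even} (note r is even). Then for every integer t ≥ 2 there exists a positive integer c with c < (t−1)·2^(n−1)·(r + (2/3)·(t−1)·(2^(2n)−1) + 2·(t−2))^n − a such that for every j with 1 ≤ j ≤ t there is a finite nonempty set F ⊆ T' with ∑_{m∈F} m^n = c + j·a. -/
open Finset Polynomial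

/-- spread the bits of `s`: bit `i` of `s` goes to bit `2i+1`. -/
def spr : ℕ → ℕ
  | 0 => 0
  | (s+1) => 2 * ((s+1) % 2) + 4 * spr ((s+1)/2)
decreasing_by exact Nat.div_lt_self (Nat.succ_pos s) one_lt_two

/-- popcount -/
def pc : ℕ → ℕ
  | 0 => 0
  | (s+1) => (s+1) % 2 + pc ((s+1)/2)
decreasing_by exact Nat.div_lt_self (Nat.succ_pos s) one_lt_two

lemma spr_zero : spr 0 = 0 := by simp [spr]
lemma pc_zero : pc 0 = 0 := by simp [pc]

lemma spr_eq (s : ℕ) : spr s = 2 * (s % 2) + 4 * spr (s/2) := by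
  cases s with
  | zero => simp [spr]
  | succ s => rw [spr]

lemma pc_eq (s : ℕ) : pc s = s % 2 + pc (s/2) := by
  cases s with
  | zero => simp [pc]
  | succ s => rw [pc]

lemma spr_two_mul (q : ℕ) : spr (2*q) = 4 * spr q := by
  rw [spr_eq]
  have h1 : (2*q) % 2 = 0 := by omega
  have h2 : (2*q) / 2 = q := by omega
  rw [h1, h2]; ring

lemma spr_two_mul_add_one (q : ℕ) : spr (2*q+1) = 2 + 4 * spr q := by
  rw [spr_eq]
  have h1 : (2*q+1) % 2 = 1 := by omega
  have h2 : (2*q+1) / 2 = q := by omega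
  rw [h1, h2]

lemma pc_two_mul (q : ℕ) : pc (2*q) = pc q := by
  rw [pc_eq]
  have h1 : (2*q) % 2 = 0 := by omega
  have h2 : (2*q) / 2 = q := by omega
  rw [h1, h2]; ring

lemma pc_two_mul_add_one (q : ℕ) : pc (2*q+1) = 1 + pc q := by
  rw [pc_eq]
  have h1 : (2*q+1) % 2 = 1 := by omega
  have h2 : (2*q+1) / 2 = q := by omega
  rw [h1, h2]

lemma spr_even (s : ℕ) : 2 ∣ spr s := ⟨s % 2 + 2 * spr (s/2), by rw [spr_eq]; ring⟩

lemma spr_eq_zero {s : ℕ} (h : spr s = 0) : s = 0 := by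
  induction s using Nat.strong_induction_on with
  | _ s ih =>
    rcases Nat.eq_zero_or_pos s with h0 | h0
    · exact h0
    · rw [spr_eq] at h
      have h1 : spr (s/2) = 0 := by omega
      have h2 : s / 2 = 0 := ih (s/2) (Nat.div_lt_self h0 one_lt_two) h1
      omega

lemma spr_inj : ∀ s u : ℕ, spr s = spr u → s = u := by
  intro s
  induction s using Nat.strong_induction_on with
  | _ s ih =>
    intro u h
    rcases Nat.eq_zero_or_pos s with h0 | h0
    · subst h0; exact (spr_eq_zero (by rw [← h, spr_zero])).symm
    · rw [spr_eq s, spr_eq u] at h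
      have hs2 : s % 2 < 2 := Nat.mod_lt _ (by norm_num)
      have hu2 : u % 2 < 2 := Nat.mod_lt _ (by norm_num)
      have hm : s % 2 = u % 2 ∧ spr (s/2) = spr (u/2) := by omega
      have := ih (s/2) (Nat.div_lt_self h0 one_lt_two) (u/2) hm.2
      omega

lemma spr_le {n : ℕ} : ∀ s, s < 2^n → spr s ≤ spr (2^n - 1) := by
  induction n with
  | zero => intro s hs; interval_cases s <;> simp
  | succ n ih =>
    intro s hs
    have hp : (0:ℕ) < 2^n := Nat.pow_pos (by norm_num) -- may need rename
    have h2 : 2^(n+1) = 2*2^n := by rw [pow_succ]; ring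
    have hmax : 2^(n+1) - 1 = 2*(2^n - 1) + 1 := by omega
    rw [hmax, spr_two_mul_add_one]
    have hdiv : s / 2 < 2^n := by omega
    have := ih (s/2) hdiv
    rw [spr_eq s]
    have : s % 2 ≤ 1 := by omega
    nlinarith [ih (s/2) hdiv]

lemma spr_max (n : ℕ) : 3 * spr (2^n - 1) + 2 = 2 * 4^n := by
  induction n with
  | zero => simp [spr_zero]
  | succ n ih =>
    have hp : (0:ℕ) < 2^n := Nat.pow_pos (by norm_num)
    have hmax : 2^(n+1) - 1 = 2*(2^n - 1) + 1 := by
      rw [pow_succ]; omega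
    rw [hmax, spr_two_mul_add_one, pow_succ]
    omega

lemma spr_add_pow : ∀ m s, s < 2^m → spr (s + 2^m) = spr s + 2 * 4^m := by
  intro m
  induction m with
  | zero =>
    intro s hs
    have : s = 0 := by omega
    subst this
    simpa [spr_zero] using spr_two_mul_add_one 0
  | succ m ih =>
    intro s hs
    have h2 : 2^(m+1) = 2*2^m := by rw [pow_succ]; ring
    rcases Nat.even_or_odd s with ⟨q, hq⟩ | ⟨q, hq⟩
    · have hq' : s = 2*q := by omega
      subst hq'
      have : 2*q + 2^(m+1) = 2*(q + 2^m) := by omega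
      rw [this, spr_two_mul, spr_two_mul, ih q (by omega)]
      rw [pow_succ]; ring
    · subst hq
      have : 2*q+1 + 2^(m+1) = 2*(q + 2^m) + 1 := by omega
      rw [this, spr_two_mul_add_one, spr_two_mul_add_one, ih q (by omega)]
      rw [pow_succ]; ring

lemma pc_add_pow : ∀ m s, s < 2^m → pc (s + 2^m) = pc s + 1 := by
  intro m
  induction m with
  | zero =>
    intro s hs
    have : s = 0 := by omega
    subst this
    simpa [pc_zero] using pc_two_mul_add_one 0
  | succ m ih =>
    intro s hs
    have h2 : 2^(m+1) = 2*2^m := by rw [pow_succ]; ring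
    rcases Nat.even_or_odd s with ⟨q, hq⟩ | ⟨q, hq⟩
    · have hq' : s = 2*q := by omega
      subst hq'
      have : 2*q + 2^(m+1) = 2*(q + 2^m) := by omega
      rw [this, pc_two_mul, pc_two_mul, ih q (by omega)]
    · subst hq
      have : 2*q+1 + 2^(m+1) = 2*(q + 2^m) + 1 := by omega
      rw [this, pc_two_mul_add_one, pc_two_mul_add_one, ih q (by omega)]
      omega

lemma pc_pow_sub_one (n : ℕ) : pc (2^n - 1) = n := by
  induction n with
  | zero => simp [pc_zero]
  | succ n ih =>
    have hp : (0:ℕ) < 2^n := Nat.pow_pos (by norm_num)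
    have hmax : 2^(n+1) - 1 = 2*(2^n - 1) + 1 := by rw [pow_succ]; omega
    rw [hmax, pc_two_mul_add_one, ih]
    omega

lemma pc_one : pc 1 = 1 := by simpa [pc_zero] using pc_two_mul_add_one 0

noncomputable def Dstep (h : ℤ) (p : ℤ[X]) : ℤ[X] := p.comp (X + C h) - p

lemma Dstep_eval (h x : ℤ) (p : ℤ[X]) : (Dstep h p).eval x = p.eval (x+h) - p.eval x := by
  simp [Dstep]

lemma comp_coeff_eval {p : ℤ[X]} {i : ℕ} (hp : p.natDegree ≤ i + 1) (h : ℤ) :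
    (p.comp (X + C h)).coeff i = p.coeff i + (i+1) * p.coeff (i+1) * h := by
  rw [← taylor_apply, taylor_coeff]
  have hd : (hasseDeriv i p).natDegree < 2 := by
    have := natDegree_hasseDeriv_le p i
    omega
  rw [eval_eq_sum_range' hd]
  rw [Finset.sum_range_succ, Finset.sum_range_succ]
  simp only [Finset.sum_range_zero, hasseDeriv_coeff]
  have c1 : (0 + i).choose i = 1 := by simp
  have c2 : (1 + i).choose i = i + 1 := by
    rw [add_comm]
    exact Nat.choose_succ_self_right i
  rw [c1, c2]
  push_cast
  ring_nf

lemma Dstep_coeff {p : ℤ[X]} {k : ℕ} (hp : p.natDegree ≤ k + 1) (h : ℤ) :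
    (Dstep h p).coeff k = (k+1) * p.coeff (k+1) * h := by
  rw [Dstep, coeff_sub, comp_coeff_eval hp]
  ring

lemma Dstep_natDegree {p : ℤ[X]} {k : ℕ} (hp : p.natDegree ≤ k + 1) (h : ℤ) :
    (Dstep h p).natDegree ≤ k := by
  rw [natDegree_le_iff_coeff_eq_zero]
  intro m hm
  have hm1 : p.natDegree ≤ m + 1 := by omega
  rw [Dstep, coeff_sub, comp_coeff_eval hm1]
  have : p.coeff (m+1) = 0 := coeff_eq_zero_of_natDegree_lt (by omega)
  rw [this]
  ring

noncomputable def Qiter (n : ℕ) : ℕ → ℤ[X]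
  | 0 => X ^ n
  | (m+1) => Dstep (2 * 4^m) (Qiter n m)

lemma Qiter_spec (n : ℕ) : ∀ m, m ≤ n →
    (Qiter n m).natDegree ≤ n - m ∧
    (Qiter n m).coeff (n - m) = ((n.descFactorial m * 2^(m^2) : ℕ) : ℤ) := by
  intro m
  induction m with
  | zero =>
    intro _
    constructor
    · simp [Qiter, natDegree_X_pow]
    · simp [Qiter]
  | succ m ih =>
    intro hm
    obtain ⟨hd, hc⟩ := ih (by omega)
    have hk : n - m = (n - (m+1)) + 1 := by omega
    have hd' : (Qiter n m).natDegree ≤ (n - (m+1)) + 1 := by omega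
    constructor
    · exact Dstep_natDegree hd' _
    · show (Dstep (2*4^m) (Qiter n m)).coeff (n - (m+1)) = _
      rw [Dstep_coeff hd' _, show n - (m+1) + 1 = n - m from by omega, hc]
      have h5 : ((n - (m+1) : ℕ) : ℤ) + 1 = ((n - m : ℕ) : ℤ) := by
        have h6 : n - (m+1) + 1 = n - m := by omega
        exact_mod_cast congrArg (Nat.cast (R := ℤ)) h6
      rw [h5]
      have key : (n - m) * (n.descFactorial m * 2^(m^2)) * (2 * 4^m)
          = n.descFactorial (m+1) * 2^((m+1)^2) := by
        rw [Nat.descFactorial_succ, show (m+1)^2 = m^2 + (2*m+1) by ring, pow_add,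
          show (4:ℕ)^m = 2^(2*m) from by rw [show (4:ℕ) = 2^2 from by norm_num, ← pow_mul]]
        ring
      exact_mod_cast key

lemma Qiter_final (n : ℕ) (x : ℤ) :
    (Qiter n n).eval x = ((n.factorial * 2^(n^2) : ℕ) : ℤ) := by
  obtain ⟨hd, hc⟩ := Qiter_spec n n le_rfl
  simp only [Nat.sub_self] at hd hc
  rw [Polynomial.eq_C_of_natDegree_le_zero hd, eval_C, hc, Nat.descFactorial_self]

lemma eval_Qiter (n : ℕ) : ∀ m, ∀ x : ℤ,
    (Qiter n m).eval x = (-1)^m * ∑ s ∈ range (2^m), (-1)^(pc s) * (x + (spr s : ℤ))^n := by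
  intro m
  induction m with
  | zero =>
    intro x
    simp [Qiter, spr_zero, pc_zero]
  | succ m ih =>
    intro x
    have hQ : Qiter n (m+1) = Dstep (2 * 4^m) (Qiter n m) := rfl
    rw [hQ, Dstep_eval, ih, ih]
    have hsplit : (2:ℕ)^(m+1) = 2^m + 2^m := by rw [pow_succ]; ring
    rw [hsplit, Finset.sum_range_add]
    have hterm : ∀ s ∈ range (2^m),
        (-1:ℤ)^(pc (2^m + s)) * (x + (spr (2^m + s) : ℤ))^n
          = -((-1)^(pc s) * ((x + 2*4^m) + (spr s : ℤ))^n) := by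
      intro s hs
      rw [Finset.mem_range] at hs
      rw [add_comm (2^m) s, pc_add_pow m s hs, spr_add_pow m s hs]
      push_cast
      ring
    rw [Finset.sum_congr rfl hterm, Finset.sum_neg_distrib]
    ring

lemma block_identity (n b : ℕ) :
    ∑ s ∈ (range (2^n)).filter (fun s => (n + pc s) % 2 = 0), (b + spr s)^n
      = (∑ s ∈ (range (2^n)).filter (fun s => ¬((n + pc s) % 2 = 0)), (b + spr s)^n)
        + n.factorial * 2^(n^2) := by
  have key : ((-1:ℤ))^n * ∑ s ∈ range (2^n), (-1)^(pc s) * ((b:ℤ) + (spr s : ℤ))^n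
      = ((n.factorial * 2^(n^2) : ℕ) : ℤ) := by
    rw [← eval_Qiter n n (b:ℤ), Qiter_final]
  have key2 : ∑ s ∈ range (2^n), (-1:ℤ)^(n + pc s) * ((b:ℤ) + (spr s : ℤ))^n
      = ((n.factorial * 2^(n^2) : ℕ) : ℤ) := by
    rw [← key, Finset.mul_sum]
    refine Finset.sum_congr rfl fun s _ => ?_
    rw [pow_add]; ring
  rw [← Finset.sum_filter_add_sum_filter_not (range (2^n))
    (fun s => (n + pc s) % 2 = 0)] at key2
  have e1 : ∀ s ∈ (range (2^n)).filter (fun s => (n + pc s) % 2 = 0),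
      (-1:ℤ)^(n + pc s) * ((b:ℤ) + (spr s:ℤ))^n = ((b:ℤ) + (spr s:ℤ))^n := by
    intro s hs
    rw [Finset.mem_filter] at hs
    rw [Even.neg_one_pow (Nat.even_iff.2 hs.2), one_mul]
  have e2 : ∀ s ∈ (range (2^n)).filter (fun s => ¬((n + pc s) % 2 = 0)),
      (-1:ℤ)^(n + pc s) * ((b:ℤ) + (spr s:ℤ))^n = -(((b:ℤ) + (spr s:ℤ))^n) := by
    intro s hs
    rw [Finset.mem_filter] at hs
    have : (n + pc s) % 2 = 1 := by omega
    rw [Odd.neg_one_pow (Nat.odd_iff.2 this), neg_one_mul]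
  rw [Finset.sum_congr rfl e1, Finset.sum_congr rfl e2, Finset.sum_neg_distrib] at key2
  have hgoal : ((∑ s ∈ (range (2^n)).filter (fun s => (n + pc s) % 2 = 0), (b + spr s)^n : ℕ) : ℤ)
      = ((∑ s ∈ (range (2^n)).filter (fun s => ¬((n + pc s) % 2 = 0)), (b + spr s)^n : ℕ) : ℤ)
        + ((n.factorial * 2^(n^2) : ℕ) : ℤ) := by
    push_cast
    push_cast at key2
    linarith [key2]
  exact_mod_cast hgoal

lemma flip_parity (n s : ℕ) (hn : 1 ≤ n) (hs : s < 2^n) :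
    (if s % 2 = 0 then s + 1 else s - 1) < 2^n ∧
    ((n + pc (if s % 2 = 0 then s + 1 else s - 1)) % 2 = 0 ↔ ¬((n + pc s) % 2 = 0)) := by
  have h2 : (2:ℕ)^n = 2 * 2^(n-1) := by
    cases n with
    | zero => omega
    | succ m => rw [Nat.succ_sub_one, pow_succ]; ring
  rcases Nat.even_or_odd s with ⟨q, hq⟩ | ⟨q, hq⟩
  · have hq' : s = 2*q := by omega
    subst hq'
    rw [if_pos (by omega)]
    refine ⟨by omega, ?_⟩
    rw [pc_two_mul_add_one, pc_two_mul]
    omega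
  · subst hq
    rw [if_neg (by omega), show 2*q+1-1 = 2*q from by omega]
    refine ⟨by omega, ?_⟩
    rw [pc_two_mul, pc_two_mul_add_one]
    omega

lemma flip_invol (s : ℕ) :
    (if (if s % 2 = 0 then s + 1 else s - 1) % 2 = 0
      then (if s % 2 = 0 then s + 1 else s - 1) + 1
      else (if s % 2 = 0 then s + 1 else s - 1) - 1) = s := by
  rcases Nat.even_or_odd s with ⟨q, hq⟩ | ⟨q, hq⟩
  · have hmod : s % 2 = 0 := by omega
    have hv : (if s % 2 = 0 then s + 1 else s - 1) = s + 1 := if_pos hmod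
    rw [hv, if_neg (by omega)]
    omega
  · have hmod : s % 2 = 1 := by omega
    have hv : (if s % 2 = 0 then s + 1 else s - 1) = s - 1 := if_neg (by omega)
    rw [hv, if_pos (by omega)]
    omega

lemma card_parity (n : ℕ) (hn : 1 ≤ n) :
    ((range (2^n)).filter (fun s => ¬((n + pc s) % 2 = 0))).card = 2^(n-1) := by
  have hcard : ((range (2^n)).filter (fun s => (n + pc s) % 2 = 0)).card
      = ((range (2^n)).filter (fun s => ¬((n + pc s) % 2 = 0))).card := by
    refine Finset.card_bij' (fun s _ => if s % 2 = 0 then s + 1 else s - 1)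
      (fun s _ => if s % 2 = 0 then s + 1 else s - 1) ?_ ?_ ?_ ?_
    · intro a ha
      rw [Finset.mem_filter, Finset.mem_range] at ha ⊢
      obtain ⟨h1, h2⟩ := flip_parity n a hn ha.1
      exact ⟨h1, by rw [h2]; omega⟩
    · intro a ha
      rw [Finset.mem_filter, Finset.mem_range] at ha ⊢
      obtain ⟨h1, h2⟩ := flip_parity n a hn ha.1
      exact ⟨h1, by rw [h2]; exact ha.2⟩
    · intro a _; exact flip_invol a
    · intro a _; exact flip_invol a
  have htot := Finset.card_filter_add_card_filter_not
    (s := range (2^n)) (p := fun s => (n + pc s) % 2 = 0)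
  rw [Finset.card_range] at htot
  have h2 : (2:ℕ)^n = 2 * 2^(n-1) := by
    cases n with
    | zero => omega
    | succ m => rw [Nat.succ_sub_one, pow_succ]; ring
  omega


/-- With `a = n!·2^(n²)`, `r = 2^(n²-n)·a` and `T' = {m : m ≥ r, m even}`, for every `t ≥ 2`
there is a positive integer `c < (t-1)·2^(n-1)·(r + (2/3)(t-1)(2^(2n)-1) + 2(t-2))^n - a`
such that each of `c + a, c + 2a, …, c + ta` is a sum of distinct `n`-th powers of
elements of `T'`. -/
theorem arithmetic_progression_in_P_T
    (n : ℕ) (hn : 2 ≤ n) (a r : ℕ)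
    (ha : a = n.factorial * 2 ^ (n ^ 2))
    (hr : r = 2 ^ (n ^ 2 - n) * a)
    (t : ℕ) (ht : 2 ≤ t) :
    ∃ c : ℕ, 0 < c ∧
      c < (t - 1) * 2 ^ (n - 1) *
        (r + 2 * (t - 1) * (2 ^ (2 * n) - 1) / 3 + 2 * (t - 2)) ^ n - a ∧
      ∀ j, 1 ≤ j → j ≤ t →
        ∃ F : Finset ℕ, F.Nonempty ∧ (∀ m ∈ F, r ≤ m ∧ 2 ∣ m) ∧
          ∑ m ∈ F, m ^ n = c + j * a := by
  obtain ⟨u, rfl⟩ : ∃ u, t = u + 2 := ⟨t - 2, by omega⟩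
  have hn0 : n ≠ 0 := by omega
  have hn2sq : 4 ≤ n^2 := by nlinarith
  have hnsq : n + 2 ≤ n^2 := by nlinarith
  set σx : ℕ := spr (2^n - 1) with hσx
  set B : ℕ → ℕ := fun k => r + k * (σx + 2) with hB
  set Pf : Finset ℕ := (range (2^n)).filter (fun s => (n + pc s) % 2 = 0) with hPf
  set Nf : Finset ℕ := (range (2^n)).filter (fun s => ¬((n + pc s) % 2 = 0)) with hNf
  set Np : ℕ → ℕ := fun k => ∑ s ∈ Nf, (B k + spr s)^n with hNp
  set Pp : ℕ → ℕ := fun k => ∑ s ∈ Pf, (B k + spr s)^n with hPp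
  set M : ℕ := r + (u+1) * σx + 2*u with hM
  have hPN : ∀ k, Pp k = Np k + a := by
    intro k
    simp only [hPp, hNp, hPf, hNf, ha]
    exact block_identity n (B k)
  have h2n : (4:ℕ) ≤ 2^n := by
    calc (4:ℕ) = 2^2 := by norm_num
    _ ≤ 2^n := Nat.pow_le_pow_right (by norm_num) hn
  have hapos : 0 < a := by rw [ha]; positivity
  have hra : 4 * a ≤ r := by
    rw [hr]
    have h1 : 2 ≤ n^2 - n := by omega
    have h2 : (4:ℕ) ≤ 2^(n^2-n) := by
      calc (4:ℕ) = 2^2 := by norm_num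
      _ ≤ _ := Nat.pow_le_pow_right (by norm_num) h1
    exact Nat.mul_le_mul_right a h2
  have h2a : 2 ∣ a := by
    rw [ha, show n^2 = (n^2 - 1) + 1 from by omega, pow_succ]
    exact ⟨n.factorial * 2^(n^2-1), by ring⟩
  have h2r : 2 ∣ r := by rw [hr]; exact Dvd.dvd.mul_left h2a _
  have h2σ : 2 ∣ σx := spr_even _
  have hσmax : 3 * σx + 2 = 2 * 4^n := spr_max n
  -- membership extraction
  have hrange : ∀ {S : Finset ℕ} {s : ℕ}, (S = Pf ∨ S = Nf) → s ∈ S → s < 2^n := by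
    rintro S s (rfl | rfl) hs <;>
    · rw [hPf] at * <;> rw [hNf] at *
      first
      | (rw [Finset.mem_filter, Finset.mem_range] at hs; exact hs.1)
  have hNf_ne : Nf.Nonempty := by
    rcases Nat.even_or_odd n with he | ho
    · have h := Nat.even_iff.1 he
      exact ⟨1, by rw [hNf, Finset.mem_filter, Finset.mem_range, pc_one]; exact ⟨by omega, by omega⟩⟩
    · have h := Nat.odd_iff.1 ho
      exact ⟨0, by rw [hNf, Finset.mem_filter, Finset.mem_range, pc_zero]; exact ⟨by omega, by omega⟩⟩
  have hPf_ne : Pf.Nonempty := by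
    rcases Nat.even_or_odd n with he | ho
    · have h := Nat.even_iff.1 he
      exact ⟨0, by rw [hPf, Finset.mem_filter, Finset.mem_range, pc_zero]; exact ⟨by omega, by omega⟩⟩
    · have h := Nat.odd_iff.1 ho
      exact ⟨1, by rw [hPf, Finset.mem_filter, Finset.mem_range, pc_one]; exact ⟨by omega, by omega⟩⟩
  -- strict bound on points of the negative part
  have hBM : ∀ k, k ≤ u → ∀ s ∈ Nf, B k + spr s < M := by
    intro k hk s hs
    have hs2 : s < 2^n := hrange (Or.inr rfl) hs
    have hsle : spr s ≤ σx := spr_le s hs2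
    have hsne : spr s ≠ σx := by
      intro h
      have : s = 2^n - 1 := spr_inj _ _ (h.trans hσx.symm ▸ h)
      rw [hNf, Finset.mem_filter] at hs
      apply hs.2
      rw [this, pc_pow_sub_one]
      omega
    have hslt : spr s < σx := lt_of_le_of_ne hsle hsne
    have hmul : k * (σx + 2) ≤ u * (σx + 2) := Nat.mul_le_mul_right _ hk
    have hexp : (u+1) * σx = u * σx + σx := by ring
    have hexp2 : u * (σx+2) = u * σx + 2*u := by ring
    simp only [hB, hM]
    linarith
  have hNfcard : Nf.card = 2^(n-1) := by rw [hNf]; exact card_parity n (by omega)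
  have hNpk : ∀ k, k ≤ u → Np k < 2^(n-1) * M^n := by
    intro k hk
    have h1 : Np k < ∑ _s ∈ Nf, M^n := by
      rw [hNp]
      apply Finset.sum_lt_sum_of_nonempty hNf_ne
      intro s hs
      exact Nat.pow_lt_pow_left (hBM k hk s hs) hn0
    rwa [Finset.sum_const, hNfcard, smul_eq_mul] at h1
  set Stot : ℕ := ∑ k ∈ range (u+1), Np k with hStot
  have hSlow : a < Stot := by
    obtain ⟨s1, hs1⟩ := hNf_ne
    have hterm : (B 0 + spr s1)^n ≤ Np 0 := by
      have h := Finset.single_le_sum (f := fun s => (B 0 + spr s)^n)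
        (fun i _ => Nat.zero_le _) hs1
      simpa [hNp] using h
    have hB0 : r ≤ B 0 + spr s1 := by
      simp only [hB, zero_mul, add_zero]
      exact Nat.le_add_right _ _
    have hrn : r ≤ r^n := Nat.le_self_pow hn0 r
    have hpow : r^n ≤ (B 0 + spr s1)^n := Nat.pow_le_pow_left hB0 n
    have h0mem : (0:ℕ) ∈ range (u+1) := by simp
    have hle : Np 0 ≤ Stot := by
      rw [hStot]
      exact Finset.single_le_sum (fun i _ => Nat.zero_le _) h0mem
    omega
  set c : ℕ := Stot - a with hc
  have hca : c + a = Stot := by omega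
  have hShigh : Stot < (u+1) * (2^(n-1) * M^n) := by
    rw [hStot]
    calc ∑ k ∈ range (u+1), Np k < ∑ _k ∈ range (u+1), (2^(n-1) * M^n) := by
          apply Finset.sum_lt_sum_of_nonempty (by simp)
          intro k hk
          rw [Finset.mem_range] at hk
          exact hNpk k (by omega)
    _ = (u+1) * (2^(n-1)*M^n) := by rw [Finset.sum_const, Finset.card_range, smul_eq_mul]
  refine ⟨c, by omega, ?_, ?_⟩
  · -- the upper bound
    have h21 : u + 2 - 1 = u + 1 := by omega
    have h22 : u + 2 - 2 = u := by omega
    have hdvd : 2 * (2^(2*n) - 1) = 3 * σx := by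
      rw [pow_mul]
      norm_num
      omega
    have hinner : 2 * (u + 1) * (2^(2*n) - 1) / 3 = (u+1) * σx := by
      rw [show 2 * (u+1) * (2^(2*n)-1) = (u+1) * (2 * (2^(2*n)-1)) from by ring,
        hdvd, show (u+1) * (3 * σx) = 3 * ((u+1) * σx) from by ring]
      exact Nat.mul_div_cancel_left _ (by norm_num)
    rw [h21, h22, hinner, ← hM]
    have hassoc : (u+1) * (2^(n-1) * M^n) = (u+1) * 2^(n-1) * M^n := by ring
    rw [hassoc] at hShigh
    exact Nat.lt_sub_of_add_lt (by omega)
  · -- the progression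
    intro j hj1 hj2
    obtain ⟨i, rfl⟩ : ∃ i, j = i + 1 := ⟨j - 1, by omega⟩
    have hi : i ≤ u + 1 := by omega
    refine ⟨(range (u+1)).biUnion
      (fun k => (if k < i then Pf else Nf).image (fun s => B k + spr s)), ?_, ?_, ?_⟩
    · -- nonempty
      have hne' : (if 0 < i then Pf else Nf).Nonempty := by
        split
        · exact hPf_ne
        · exact hNf_ne
      obtain ⟨s, hs⟩ := hne'
      exact ⟨B 0 + spr s, Finset.mem_biUnion.2 ⟨0, by simp, Finset.mem_image_of_mem _ hs⟩⟩
    · -- membership conditions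
      intro m hm
      obtain ⟨k, _, hm'⟩ := Finset.mem_biUnion.1 hm
      obtain ⟨s, _, rfl⟩ := Finset.mem_image.1 hm'
      constructor
      · simp only [hB]
        calc r ≤ r + (k * (σx+2) + spr s) := Nat.le_add_right _ _
        _ = r + k * (σx+2) + spr s := by ring
      · simp only [hB]
        have h2σ2 : 2 ∣ σx + 2 := by omega
        exact dvd_add (dvd_add h2r (Dvd.dvd.mul_left h2σ2 k)) (spr_even s)
    · -- the sum
      have hdisj : (↑(range (u+1)) : Set ℕ).PairwiseDisjoint
          (fun k => (if k < i then Pf else Nf).image (fun s => B k + spr s)) := by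
        have key : ∀ k k' : ℕ, k < k' →
            Disjoint ((if k < i then Pf else Nf).image (fun s => B k + spr s))
              ((if k' < i then Pf else Nf).image (fun s => B k' + spr s)) := by
          intro k k' hkk
          rw [Finset.disjoint_left]
          intro m hm1 hm2
          obtain ⟨s, hs, he⟩ := Finset.mem_image.1 hm1
          obtain ⟨s', hs', he'⟩ := Finset.mem_image.1 hm2
          have hor : ∀ l : ℕ, (if l < i then Pf else Nf) = Pf ∨ (if l < i then Pf else Nf) = Nf := by
            intro l
            split
            · exact Or.inl rfl
            · exact Or.inr rfl
          have hs2 : s < 2^n := hrange (hor k) hs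
          have hs2' : s' < 2^n := hrange (hor k') hs'
          have hb1 : spr s ≤ σx := spr_le s hs2
          have hb2 : spr s' ≤ σx := spr_le s' hs2'
          have hmul : (k+1) * (σx + 2) ≤ k' * (σx + 2) := Nat.mul_le_mul_right _ (by omega)
          have hexp : (k+1) * (σx+2) = k * (σx+2) + σx + 2 := by ring
          have heq : B k + spr s = B k' + spr s' := he.trans he'.symm
          simp only [hB] at heq
          linarith
        intro x hx y hy hxy
        rcases Nat.lt_or_ge x y with h | h
        · exact key x y h
        · exact (key y x (by omega)).symm
      rw [Finset.sum_biUnion hdisj]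
      have hblock : ∀ k ∈ range (u+1),
          ∑ m ∈ (if k < i then Pf else Nf).image (fun s => B k + spr s), m^n
            = Np k + (if k < i then a else 0) := by
        intro k _
        rw [Finset.sum_image (fun x _ y _ h => spr_inj x y (by omega))]
        split
        · calc ∑ s ∈ Pf, (B k + spr s)^n = Pp k := by simp only [hPp]
          _ = Np k + a := hPN k
        · calc ∑ s ∈ Nf, (B k + spr s)^n = Np k := by simp only [hNp]
          _ = Np k + 0 := by omega
      rw [Finset.sum_congr rfl hblock, Finset.sum_add_distrib]
      have hfil : ∑ k ∈ range (u+1), (if k < i then a else 0) = i * a := by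
        rw [← Finset.sum_filter]
        have : (range (u+1)).filter (fun k => k < i) = range i := by
          ext x
          simp only [Finset.mem_filter, Finset.mem_range]
          omega
        rw [this, Finset.sum_const, Finset.card_range, smul_eq_mul]
      rw [hfil, ← hStot]
      calc Stot + i * a = (c + a) + i * a := by rw [hca]
      _ = c + (i+1) * a := by ring
end

section
/- Let n ≥ 2 be an integer, a = n!·2^(n²), and r = 2^(n²−n)·a, and let B₁ = {α·a + β : 0 ≤ α ≤ 2^(n²−n)−1, 1 ≤ β ≤ 2^n}. Then the sum of the n-th powers of all elements of B₁ satisfies ∑_{m∈B₁} m^n < 2^(n²)·(r^n − n!) = 2^(n²)·r^n − a. -/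
/-- With `a = n!·2^(n²)`, `r = 2^(n²-n)·a`, and
`B₁ = {α·a + β : 0 ≤ α ≤ 2^(n²-n)-1, 1 ≤ β ≤ 2^n}`, the sum of `n`-th powers of the
elements of `B₁` satisfies `∑_{m∈B₁} m^n < 2^(n²)·(r^n - n!) = 2^(n²)·r^n - a`. -/
theorem sum_of_powers_of_B1_bound
    (n : ℕ) (hn : 2 ≤ n) (a r : ℕ)
    (ha : a = n.factorial * 2 ^ (n ^ 2))
    (hr : r = 2 ^ (n ^ 2 - n) * a)
    (B1 : Finset ℕ)
    (hB1 : B1 = (Finset.range (2 ^ (n ^ 2 - n)) ×ˢ Finset.Icc 1 (2 ^ n)).image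
      (fun p => p.1 * a + p.2)) :
    (∑ m ∈ B1, m ^ n < 2 ^ (n ^ 2) * (r ^ n - n.factorial)) ∧
    2 ^ (n ^ 2) * (r ^ n - n.factorial) = 2 ^ (n ^ 2) * r ^ n - a := by
  have hn0 : n ≠ 0 := by omega
  have hnn : n ≤ n ^ 2 := by nlinarith
  have hfact2 : 2 ≤ n.factorial := by
    calc 2 = Nat.factorial 2 := rfl
    _ ≤ n.factorial := Nat.factorial_le hn
  have hpow2 : (0:ℕ) < 2 ^ (n ^ 2) := Nat.pow_pos (by norm_num)
  have hq_lt_a : 2 ^ n < a := by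
    rw [ha]
    calc 2 ^ n ≤ 2 ^ (n ^ 2) := Nat.pow_le_pow_right (by norm_num) hnn
    _ < 2 * 2 ^ (n ^ 2) := by omega
    _ ≤ n.factorial * 2 ^ (n ^ 2) := Nat.mul_le_mul_right _ hfact2
  have ha_pos : 0 < a := lt_trans (Nat.pow_pos (by norm_num)) hq_lt_a
  have hr_pos : 0 < r := by
    rw [hr]; exact Nat.mul_pos (Nat.pow_pos (by norm_num)) ha_pos
  have h1lt : (1:ℕ) < 2 ^ (n ^ 2) := Nat.one_lt_two_pow_iff.mpr (pow_ne_zero 2 hn0)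
  have hfact_lt_r : n.factorial < r := by
    rw [hr, ha]
    calc n.factorial < n.factorial * 2 ^ (n ^ 2) :=
        lt_mul_of_one_lt_right (Nat.factorial_pos n) h1lt
    _ ≤ 2 ^ (n ^ 2 - n) * (n.factorial * 2 ^ (n ^ 2)) :=
        Nat.le_mul_of_pos_left _ (Nat.pow_pos (by norm_num))
  have hfact_lt : n.factorial < r ^ (n - 1) := by
    calc n.factorial < r := hfact_lt_r
    _ = r ^ 1 := (pow_one r).symm
    _ ≤ r ^ (n - 1) := Nat.pow_le_pow_right hr_pos (by omega)
  have hmem : ∀ m ∈ B1, m ^ n ≤ (r - 1) ^ n := by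
    intro m hm
    rw [hB1] at hm
    obtain ⟨p, hp, hpm⟩ := Finset.mem_image.mp hm
    rw [Finset.mem_product, Finset.mem_range, Finset.mem_Icc] at hp
    have hm_lt : m < r := by
      rw [← hpm, hr]
      calc p.1 * a + p.2 ≤ p.1 * a + 2 ^ n := by omega
      _ < p.1 * a + a := by omega
      _ = (p.1 + 1) * a := by ring
      _ ≤ 2 ^ (n ^ 2 - n) * a := Nat.mul_le_mul_right _ (by omega)
    exact Nat.pow_le_pow_left (by omega) n
  have hcard : B1.card ≤ 2 ^ (n ^ 2) := by
    rw [hB1]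
    calc ((Finset.range (2 ^ (n ^ 2 - n)) ×ˢ Finset.Icc 1 (2 ^ n)).image
        (fun p => p.1 * a + p.2)).card
        ≤ (Finset.range (2 ^ (n ^ 2 - n)) ×ˢ Finset.Icc 1 (2 ^ n)).card :=
          Finset.card_image_le
    _ = 2 ^ (n ^ 2 - n) * 2 ^ n := by
        rw [Finset.card_product, Finset.card_range, Nat.card_Icc]
        simp
    _ = 2 ^ (n ^ 2) := by rw [← pow_add]; congr 1; omega
  have hkey : (r - 1) ^ n + r ^ (n - 1) ≤ r ^ n := by
    have e : (r - 1) ^ n = (r - 1) * (r - 1) ^ (n - 1) := by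
      conv_lhs => rw [show n = 1 + (n - 1) by omega]
      rw [pow_add, pow_one]
    have h1 : (r - 1) ^ n ≤ (r - 1) * r ^ (n - 1) := by
      rw [e]
      exact Nat.mul_le_mul_left _ (Nat.pow_le_pow_left (by omega) _)
    have h2 : (r - 1) * r ^ (n - 1) + r ^ (n - 1) = r ^ n := by
      have e2 : (r - 1) * r ^ (n - 1) + r ^ (n - 1) = r * r ^ (n - 1) := by
        cases r with
        | zero => omega
        | succ k => simp [Nat.succ_sub_one]; ring
      rw [e2, ← pow_succ']
      congr 1
      omega
    omega
  have hmain : (r - 1) ^ n < r ^ n - n.factorial := by omega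
  have hsum : (∑ m ∈ B1, m ^ n) ≤ B1.card * (r - 1) ^ n := by
    simpa using Finset.sum_le_card_nsmul B1 (fun m => m ^ n) ((r - 1) ^ n) hmem
  constructor
  · calc (∑ m ∈ B1, m ^ n) ≤ B1.card * (r - 1) ^ n := hsum
      _ ≤ 2 ^ (n ^ 2) * (r - 1) ^ n := Nat.mul_le_mul_right _ hcard
      _ < 2 ^ (n ^ 2) * (r ^ n - n.factorial) :=
          mul_lt_mul_of_pos_left hmain hpow2
  · rw [Nat.mul_sub, ha]
    ring_nf
end

section
/- Let n ≥ 2 be an integer, a = n!·2^(n²), and r = 2^(n²−n)·a. Then ((2^(n²−n)−1)·a + 2^n)^n < r^n − (a − 2^n)^n, and in particular the largest element of B₁ = {α·a + β : 0 ≤ α ≤ 2^(n²−n)−1, 1 ≤ β ≤ 2^n} has n-th power strictly less than r^n − n!. -/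
lemma key_pow_add_pow (x y : ℕ) (hx : 1 ≤ x) (hy : 1 ≤ y) :
    ∀ n, 2 ≤ n → x ^ n + y ^ n < (x + y) ^ n := by
  intro n hn
  induction n with
  | zero => omega
  | succ m ih =>
    rcases Nat.lt_or_ge m 2 with hm | hm
    · interval_cases m
      · omega
      · ring_nf
        nlinarith
    · have h := ih hm
      calc x ^ (m + 1) + y ^ (m + 1) ≤ (x + y) * (x ^ m + y ^ m) := by
            ring_nf; nlinarith [pow_pos (show 0 < x by omega) m,
              pow_pos (show 0 < y by omega) m]
        _ < (x + y) * (x + y) ^ m := by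
            have : 0 < x + y := by omega
            exact (Nat.mul_lt_mul_left this).mpr h
        _ = (x + y) ^ (m + 1) := by ring

/-- With `a = n!·2^(n²)` and `r = 2^(n²-n)·a`, the largest element of `B₁` satisfies
`((2^(n²-n)-1)·a + 2^n)^n < r^n - (a - 2^n)^n`, and in particular its `n`-th power is
strictly less than `r^n - n!`. -/
theorem largest_element_of_B1_power_bound
    (n : ℕ) (hn : 2 ≤ n) (a r : ℕ)
    (ha : a = n.factorial * 2 ^ (n ^ 2))
    (hr : r = 2 ^ (n ^ 2 - n) * a) :
    ((2 ^ (n ^ 2 - n) - 1) * a + 2 ^ n) ^ n < r ^ n - (a - 2 ^ n) ^ n ∧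
    ((2 ^ (n ^ 2 - n) - 1) * a + 2 ^ n) ^ n < r ^ n - n.factorial := by
  set m : ℕ := 2 ^ (n ^ 2 - n) with hm
  have hm1 : 1 ≤ m := Nat.one_le_two_pow
  have hfac1 : 1 ≤ n.factorial := Nat.factorial_pos n
  have hn2 : n + 1 ≤ n ^ 2 := by nlinarith
  have h2n : 2 ^ (n + 1) ≤ 2 ^ (n ^ 2) := Nat.pow_le_pow_right (by norm_num) hn2
  have h2n4 : (4 : ℕ) ≤ 2 ^ n := by
    calc (4 : ℕ) = 2 ^ 2 := by norm_num
    _ ≤ 2 ^ n := Nat.pow_le_pow_right (by norm_num) hn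
  have hage : 2 * (n.factorial * 2 ^ n) ≤ a := by
    rw [ha]
    calc 2 * (n.factorial * 2 ^ n) = n.factorial * 2 ^ (n + 1) := by ring
    _ ≤ n.factorial * 2 ^ (n ^ 2) := Nat.mul_le_mul_left _ h2n
  have hfact : n.factorial < a - 2 ^ n := by
    rw [Nat.lt_sub_iff_add_lt]
    nlinarith
  have hy1 : 1 ≤ a - 2 ^ n := by omega
  have h2na : 2 ^ n ≤ a := by omega
  -- x + y = r
  have hsum : (m - 1) * a + 2 ^ n + (a - 2 ^ n) = r := by
    rw [hr]
    have : (m - 1) * a + a = m * a := by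
      rw [Nat.sub_one_mul]
      have : a ≤ m * a := Nat.le_mul_of_pos_left a hm1
      omega
    omega
  have hx1 : 1 ≤ (m - 1) * a + 2 ^ n := by omega
  have hkey := key_pow_add_pow _ _ hx1 hy1 n hn
  rw [hsum] at hkey
  constructor
  · omega
  · have hle : n.factorial ≤ (a - 2 ^ n) ^ n :=
      le_trans (le_of_lt hfact) (Nat.le_self_pow (by omega) _)
    omega
end
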